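/- arXiv:2305.05895 — 7 statements merged into one kernel-verified Lean document; each statement's English description precedes it below -/
import Mathlib

section
/- For all real numbers x, y ≥ 0 (with x ≠ y, x,y > 0), one has (x/y + y/x) * ln|(x+y)/(x-y)| - 2 ≥ 0. -/
open Real Set

lemma key_log_bound (u : ℝ) (hu0 : 0 ≤ u) (hu1 : u < 1) :
    2 * u ≤ Real.log (1 + u) - Real.log (1 - u) := by
  set f : ℝ → ℝ := fun v => Real.log (1 + v) - Real.log (1 - v) - 2 * v with hf
  have hderiv : ∀ v ∈ Set.Ioo (0:ℝ) u, HasDerivAt f (1/(1+v) + 1/(1-v) - 2) v := by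
    intro v hv
    have hv0 : 0 < v := hv.1
    have hv1 : v < 1 := lt_of_lt_of_le hv.2 hu1.le
    have h1 : (1 + v) ≠ 0 := by nlinarith
    have h2 : (1 - v) ≠ 0 := by nlinarith
    have d1 : HasDerivAt (fun v : ℝ => Real.log (1 + v)) (1/(1+v)) v := by
      have : HasDerivAt (fun v : ℝ => 1 + v) 1 v := (hasDerivAt_id v).const_add 1
      simpa [one_div] using this.log h1
    have d2 : HasDerivAt (fun v : ℝ => Real.log (1 - v)) (-1/(1-v)) v := by
      have : HasDerivAt (fun v : ℝ => 1 - v) (-1) v := (hasDerivAt_id v).const_sub 1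
      simpa using this.log h2
    have d3 : HasDerivAt (fun v : ℝ => 2 * v) 2 v := by
      simpa using (hasDerivAt_id v).const_mul 2
    have := (d1.sub d2).sub d3
    rw [show (1/(1+v) + 1/(1-v) - 2) = 1/(1+v) - -1/(1-v) - 2 by ring]
    exact this
  have hcont : ContinuousOn f (Set.Icc 0 u) := by
    apply ContinuousOn.sub
    apply ContinuousOn.sub
    · apply ContinuousOn.log (by fun_prop)
      intro v hv; have := hv.1; nlinarith
    · apply ContinuousOn.log (by fun_prop)
      intro v hv; have := hv.2; nlinarith
    · fun_prop
  have hmono : MonotoneOn f (Set.Icc 0 u) := by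
    apply monotoneOn_of_deriv_nonneg (convex_Icc 0 u) hcont
    · intro v hv
      rw [interior_Icc] at hv
      exact (hderiv v hv).differentiableAt.differentiableWithinAt
    · intro v hv
      rw [interior_Icc] at hv
      rw [(hderiv v hv).deriv]
      have hv0 : 0 < v := hv.1
      have hv1 : v < 1 := lt_of_lt_of_le hv.2 hu1.le
      have h1 : 0 < 1 + v := by linarith
      have h2 : 0 < 1 - v := by linarith
      rw [div_add_div _ _ (ne_of_gt h1) (ne_of_gt h2), sub_nonneg, le_div_iff₀ (by positivity)]
      nlinarith
  have h0 : f 0 = 0 := by simp [hf]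
  have := hmono (Set.left_mem_Icc.2 hu0) (Set.right_mem_Icc.2 hu0) hu0
  rw [h0] at this
  simp only [hf] at this
  linarith

lemma kernel_aux (x y : ℝ) (hy : 0 < y) (hxy : y < x) :
    (x / y + y / x) * Real.log (|(x + y) / (x - y)|) - 2 ≥ 0 := by
  have hx : 0 < x := hy.trans hxy
  have hsub : 0 < x - y := by linarith
  have habs : |(x + y) / (x - y)| = (x + y) / (x - y) := abs_of_pos (by positivity)
  set u := y / x with hu
  have hu0 : 0 < u := by positivity
  have hu1 : u < 1 := (div_lt_one hx).2 hxy
  have hrw : (x + y) / (x - y) = (1 + u) / (1 - u) := by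
    rw [hu]; field_simp
  have hlog : Real.log ((x + y) / (x - y)) = Real.log (1 + u) - Real.log (1 - u) := by
    rw [hrw, Real.log_div (by linarith) (by linarith)]
  have hk := key_log_bound u hu0.le hu1
  have hA : 0 < x / y + y / x := by positivity
  have h1 : (x / y + y / x) * (2 * u) ≤ (x / y + y / x) * Real.log (|(x + y) / (x - y)|) := by
    rw [habs, hlog]
    exact mul_le_mul_of_nonneg_left hk hA.le
  have h2 : (x / y + y / x) * (2 * u) ≥ 2 := by
    rw [hu]
    have : (x / y + y / x) * (2 * (y / x)) = 2 + 2 * (y / x) ^ 2 := by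
      field_simp
    rw [this]
    nlinarith [sq_nonneg (y / x)]
  linarith

theorem kernel_nonneg (x y : ℝ) (hx : 0 < x) (hy : 0 < y) (hxy : x ≠ y) :
    (x / y + y / x) * Real.log (|(x + y) / (x - y)|) - 2 ≥ 0 := by
  rcases lt_or_gt_of_ne hxy with h | h
  · have := kernel_aux y x hx h
    have habs : |(x + y) / (x - y)| = |(y + x) / (y - x)| := by
      rw [abs_div, abs_div, abs_sub_comm, add_comm]
    rw [habs]
    linarith [this]
  · exact kernel_aux x y hy h
end

section
/- Let F'(t) = ((t^2+1)/(2t^2)) * ln|(t+1)/(t-1)| - 1/t for t > 0, t ≠ 1. Then F'(t) > 0 for all t > 0 with t ≠ 1. -/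
noncomputable def Fderiv (t : ℝ) : ℝ :=
  ((t ^ 2 + 1) / (2 * t ^ 2)) * Real.log (|(t + 1) / (t - 1)|) - 1 / t

lemma key_log_ineq {x : ℝ} (hx : 1 < x) : 2 * (x - 1) / (x + 1) < Real.log x := by
  set g : ℝ → ℝ := fun y => Real.log y - 2 * (y - 1) / (y + 1) with hg
  have hmono : StrictMonoOn g (Set.Ici 1) := by
    apply strictMonoOn_of_deriv_pos (convex_Ici 1)
    · apply ContinuousOn.sub
      · exact Real.continuousOn_log.mono (fun y hy => by
          simp only [Set.mem_Ici] at hy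
          simp only [Set.mem_compl_iff, Set.mem_singleton_iff]
          linarith)
      · apply ContinuousOn.div
        · fun_prop
        · fun_prop
        · intro y hy
          simp only [Set.mem_Ici] at hy
          linarith
    · intro y hy
      rw [interior_Ici] at hy
      have hy1 : (1:ℝ) < y := hy
      have hy0 : (0:ℝ) < y := by linarith
      have hyne : y + 1 ≠ 0 := by linarith
      have hd : HasDerivAt g (1 / y - 4 / (y + 1) ^ 2) y := by
        have h1 : HasDerivAt Real.log (1 / y) y := by
          simpa [one_div] using Real.hasDerivAt_log hy0.ne'
        have h2 : HasDerivAt (fun y : ℝ => 2 * (y - 1) / (y + 1)) (4 / (y + 1) ^ 2) y := by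
          have ha : HasDerivAt (fun y : ℝ => 2 * (y - 1)) 2 y := by
            simpa using ((hasDerivAt_id y).sub_const 1).const_mul 2
          have hb : HasDerivAt (fun y : ℝ => y + 1) 1 y := (hasDerivAt_id y).add_const 1
          have : HasDerivAt (fun y : ℝ => 2 * (y - 1) / (y + 1)) ((2 * (y + 1) - 2 * (y - 1) * 1) / (y + 1) ^ 2) y := ha.div hb hyne
          convert this using 1
          ring
        exact h1.sub h2
      rw [hd.deriv]
      have heq : 1 / y - 4 / (y + 1) ^ 2 = (y - 1) ^ 2 / (y * (y + 1) ^ 2) := by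
        field_simp
        ring
      rw [heq]
      apply div_pos
      · have : y - 1 ≠ 0 := by linarith
        positivity
      · positivity
  have h := hmono (Set.self_mem_Ici) (Set.mem_Ici.2 hx.le) hx
  have hg1 : g 1 = 0 := by simp [hg]
  rw [hg1] at h
  simp only [hg] at h
  linarith

theorem Fderiv_pos (t : ℝ) (ht : 0 < t) (ht1 : t ≠ 1) : 0 < Fderiv t := by
  unfold Fderiv
  rcases lt_or_gt_of_ne ht1 with hlt | hgt
  · -- 0 < t < 1
    have h1 : |(t + 1) / (t - 1)| = (1 + t) / (1 - t) := by
      rw [abs_div, abs_of_pos (by linarith), abs_of_neg (by linarith)]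
      ring_nf
    rw [h1]
    have hx : 1 < (1 + t) / (1 - t) := by
      rw [lt_div_iff₀ (by linarith)]
      linarith
    have hlog := key_log_ineq hx
    have hval : 2 * ((1 + t) / (1 - t) - 1) / ((1 + t) / (1 - t) + 1) = 2 * t := by
      have hd : (1:ℝ) - t ≠ 0 := by linarith
      field_simp
      ring
    rw [hval] at hlog
    have hc : 0 < (t ^ 2 + 1) / (2 * t ^ 2) := by positivity
    have h2 : (t ^ 2 + 1) / (2 * t ^ 2) * (2 * t) - 1 / t = t := by
      field_simp
      ring
    nlinarith [mul_lt_mul_of_pos_left hlog hc]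
  · -- t > 1
    have h1 : |(t + 1) / (t - 1)| = (t + 1) / (t - 1) := by
      rw [abs_of_pos (div_pos (by linarith) (by linarith))]
    rw [h1]
    have hx : 1 < (t + 1) / (t - 1) := by
      rw [lt_div_iff₀ (by linarith)]
      linarith
    have hlog := key_log_ineq hx
    have hval : 2 * ((t + 1) / (t - 1) - 1) / ((t + 1) / (t - 1) + 1) = 2 / t := by
      have h2 : t - 1 ≠ 0 := by linarith
      field_simp
      ring
    rw [hval] at hlog
    have hc : 0 < (t ^ 2 + 1) / (2 * t ^ 2) := by positivity
    have h2 : (t ^ 2 + 1) / (2 * t ^ 2) * (2 / t) - 1 / t = 1 / t ^ 3 := by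
      field_simp
      ring
    have h3 : 0 < 1 / t ^ 3 := by positivity
    nlinarith [mul_lt_mul_of_pos_left hlog hc]
end

section
/- Let f : ℝ → ℝ be even and continuous with f(0) = 1, (1-x²)₊ ≤ f(x) ≤ 1 for all x, f non-increasing on [0,∞), and s ↦ f(√s) convex. Then for any x > 0, c(f) := (2/π) ∫₀^∞ (1 - f(y))/y² dy satisfies c(f) ≤ min{ (4(x+1)/(πx)) (1 - f(x))^{1/2}, 4/π }. -/
open MeasureTheory

theorem cf_upper_bound (f : ℝ → ℝ) (hcont : Continuous f)
    (heven : ∀ x, f (-x) = f x) (h0 : f 0 = 1)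
    (hbound : ∀ x, max (1 - x ^ 2) 0 ≤ f x ∧ f x ≤ 1)
    (hmono : AntitoneOn f (Set.Ici 0))
    (hconv : ConvexOn ℝ (Set.Ici 0) (fun s => f (Real.sqrt s)))
    (x : ℝ) (hx : 0 < x) :
    (2 / Real.pi) * ∫ y in Set.Ioi (0 : ℝ), (1 - f y) / y ^ 2 ≤
      min ((4 * (x + 1) / (Real.pi * x)) * Real.sqrt (1 - f x)) (4 / Real.pi) := by
  have hπ : (0:ℝ) < Real.pi := Real.pi_pos
  set g : ℝ → ℝ := fun y => (1 - f y) / y ^ 2 with hgdef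
  -- basic pointwise facts
  have hf0 : ∀ y, 0 ≤ f y := fun y => le_trans (le_max_right _ _) (hbound y).1
  have hf1 : ∀ y, f y ≤ 1 := fun y => (hbound y).2
  have hfq : ∀ y : ℝ, 1 - f y ≤ y ^ 2 := by
    intro y
    have := le_trans (le_max_left (1 - y ^ 2) 0) (hbound y).1
    linarith
  have hgnn : ∀ y, 0 ≤ g y := fun y => div_nonneg (by linarith [hf1 y]) (sq_nonneg y)
  have hmeas : Measurable g := by
    apply Measurable.div
    · exact measurable_const.sub hcont.measurable
    · exact (measurable_id.pow_const 2)
  -- convexity consequence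
  have hconv5 : ∀ y, x ≤ y → 1 - f y ≤ (1 - f x) * y ^ 2 / x ^ 2 := by
    intro y hxy
    have hy0 : 0 < y := lt_of_lt_of_le hx hxy
    have ht0 : (0:ℝ) < x ^ 2 / y ^ 2 := by positivity
    have ht1 : x ^ 2 / y ^ 2 ≤ 1 := by
      rw [div_le_one (by positivity)]; nlinarith
    have key := hconv.2 (Set.mem_Ici.mpr le_rfl) (Set.mem_Ici.mpr (sq_nonneg y))
      (show (0:ℝ) ≤ 1 - x ^ 2 / y ^ 2 by linarith)
      (show (0:ℝ) ≤ x ^ 2 / y ^ 2 from ht0.le) (by ring)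
    have hxx : (1 - x ^ 2 / y ^ 2) • (0:ℝ) + (x ^ 2 / y ^ 2) • y ^ 2 = x ^ 2 := by
      simp only [smul_eq_mul, mul_zero, zero_add]; field_simp
    rw [hxx] at key
    simp only [smul_eq_mul, Real.sqrt_sq hx.le, Real.sqrt_zero, Real.sqrt_sq hy0.le, h0] at key
    -- key : f x ≤ (1 - x^2/y^2) * 1 + x^2/y^2 * f y
    rw [le_div_iff₀ (by positivity : (0:ℝ) < x ^ 2)]
    have h2 : x ^ 2 / y ^ 2 * (1 - f y) ≤ 1 - f x := by nlinarith
    rw [div_mul_eq_mul_div, div_le_iff₀ (by positivity : (0:ℝ) < y ^ 2)] at h2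
    nlinarith [h2]
  -- integrability on tails and bounded pieces
  have hrpow_eq : ∀ y : ℝ, 0 < y → y ^ (-2:ℝ) = (y ^ 2)⁻¹ := by
    intro y hy
    rw [Real.rpow_neg hy.le, show ((2:ℝ)) = ((2:ℕ):ℝ) by norm_num, Real.rpow_natCast]
  have hIoiInt : ∀ c : ℝ, 0 < c → IntegrableOn g (Set.Ioi c) := by
    intro c hc
    apply Integrable.mono' (integrableOn_Ioi_rpow_of_lt (a := (-2:ℝ)) (by norm_num) hc)
    · exact hmeas.aestronglyMeasurable.restrict
    · filter_upwards [ae_restrict_mem measurableSet_Ioi] with y hy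
      have hy0 : 0 < y := lt_trans hc hy
      rw [Real.norm_eq_abs, abs_of_nonneg (hgnn y), hrpow_eq y hy0, ← one_div]
      have hy2 : (0:ℝ) < y ^ 2 := by positivity
      show (1 - f y) / y ^ 2 ≤ 1 / y ^ 2
      gcongr
      linarith [hf0 y]
  have hIocInt : ∀ c : ℝ, IntegrableOn g (Set.Ioc 0 c) := by
    intro c
    apply Measure.integrableOn_of_bounded (M := 1) measure_Ioc_lt_top.ne
      hmeas.aestronglyMeasurable
    filter_upwards [ae_restrict_mem measurableSet_Ioc] with y hy
    have hy0 : 0 < y := hy.1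
    rw [Real.norm_eq_abs, abs_of_nonneg (hgnn y), hgdef]
    rw [div_le_one (by positivity)]
    exact hfq y
  have hIntIoi0 : IntegrableOn g (Set.Ioi 0) := by
    rw [← Set.Ioc_union_Ioi_eq_Ioi zero_le_one]
    exact (hIocInt 1).union (hIoiInt 1 one_pos)
  -- splitting
  have hsplit : ∀ c d : ℝ, 0 ≤ c → c ≤ d →
      ∫ y in Set.Ioi c, g y = (∫ y in Set.Ioc c d, g y) + ∫ y in Set.Ioi d, g y := by
    intro c d hc hcd
    rw [← setIntegral_union (Set.Ioc_disjoint_Ioi le_rfl) measurableSet_Ioi,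
      Set.Ioc_union_Ioi_eq_Ioi hcd]
    · rcases eq_or_lt_of_le hc with rfl | hc'
      · exact hIntIoi0.mono_set Set.Ioc_subset_Ioi_self
      · exact (hIoiInt c hc').mono_set Set.Ioc_subset_Ioi_self
    · rcases eq_or_lt_of_le (hc.trans hcd) with rfl | hd'
      · exact hIntIoi0
      · exact hIoiInt d hd'
  -- integrals of comparison functions
  have comp1 : ∀ c : ℝ, 0 ≤ c → ∫ _y in Set.Ioc (0:ℝ) c, (1:ℝ) = c := by
    intro c hc
    simp [Real.volume_Ioc, hc]
  have comp2 : ∀ c d : ℝ, 0 < c → c ≤ d →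
      ∫ y in Set.Ioc c d, (y ^ 2)⁻¹ = c⁻¹ - d⁻¹ := by
    intro c d hc hcd
    rw [← intervalIntegral.integral_of_le hcd]
    have : ∀ y : ℝ, (y ^ 2)⁻¹ = y ^ (-2:ℤ) := by intro y; norm_num [zpow_neg, zpow_ofNat]
    simp_rw [this]
    rw [integral_zpow]
    · norm_num
      ring
    · right
      constructor
      · norm_num
      · rw [Set.uIcc_of_le hcd]
        intro h
        exact absurd h.1 (by linarith)
  have comp3 : ∀ c : ℝ, 0 < c → ∫ y in Set.Ioi c, (y ^ 2)⁻¹ = c⁻¹ := by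
    intro c hc
    rw [← setIntegral_congr_fun measurableSet_Ioi
      (fun y (hy : y ∈ Set.Ioi c) => hrpow_eq y (hc.trans hy))]
    rw [integral_Ioi_rpow_of_lt (by norm_num) hc]
    rw [show (-2:ℝ) + 1 = -1 by norm_num, Real.rpow_neg_one]
    field_simp
  have hinv_int : ∀ c d : ℝ, 0 < c → IntegrableOn (fun y : ℝ => (y ^ 2)⁻¹) (Set.Ioc c d) := by
    intro c d hc
    apply IntegrableOn.mono_set _ Set.Ioc_subset_Icc_self
    apply ContinuousOn.integrableOn_Icc
    apply ContinuousOn.inv₀ (by fun_prop)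
    intro y hy
    have : 0 < y := lt_of_lt_of_le hc hy.1
    positivity
  have hinv_int' : ∀ c : ℝ, 0 < c → IntegrableOn (fun y : ℝ => (y ^ 2)⁻¹) (Set.Ioi c) := by
    intro c hc
    exact (integrableOn_Ioi_rpow_of_lt (a := (-2:ℝ)) (by norm_num) hc).congr_fun
      (fun y hy => hrpow_eq y (hc.trans hy)) measurableSet_Ioi
  -- generic tail bound
  have tailB : ∀ c : ℝ, 0 < c → ∫ y in Set.Ioi c, g y ≤ c⁻¹ := by
    intro c hc
    calc ∫ y in Set.Ioi c, g y ≤ ∫ y in Set.Ioi c, (y ^ 2)⁻¹ := by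
          apply setIntegral_mono_on (hIoiInt c hc) (hinv_int' c hc) measurableSet_Ioi
          intro y hy
          have hy0 : 0 < y := hc.trans hy
          show (1 - f y) / y ^ 2 ≤ (y ^ 2)⁻¹
          rw [← one_div]
          have hy2 : (0:ℝ) < y ^ 2 := by positivity
          gcongr
          linarith [hf0 y]
      _ = c⁻¹ := comp3 c hc
  have headB : ∀ c : ℝ, 0 ≤ c → ∫ y in Set.Ioc (0:ℝ) c, g y ≤ c := by
    intro c hc
    calc ∫ y in Set.Ioc (0:ℝ) c, g y ≤ ∫ _y in Set.Ioc (0:ℝ) c, (1:ℝ) := by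
          apply setIntegral_mono_on (hIocInt c)
            (integrableOn_const measure_Ioc_lt_top.ne) measurableSet_Ioc
          intro y hy
          show (1 - f y) / y ^ 2 ≤ 1
          rw [div_le_one (pow_pos hy.1 2)]
          exact hfq y
      _ = c := comp1 c hc
  set ε := 1 - f x with hεdef
  have hε0 : 0 ≤ ε := by rw [hεdef]; linarith [hf1 x]
  have hεx : ε ≤ x ^ 2 := by rw [hεdef]; linarith [hfq x]
  have hε1 : ε ≤ 1 := by rw [hεdef]; linarith [hf0 x]
  rcases eq_or_lt_of_le hε0 with heq | hεpos
  · -- case ε = 0 : the integrand vanishes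
    have hzero : Set.EqOn g 0 (Set.Ioi 0) := by
      intro y hy
      have hy0 : 0 < y := hy
      have hle : 1 - f y ≤ 0 := by
        rcases le_total y x with h | h
        · have := hmono (Set.mem_Ici.mpr hy0.le) (Set.mem_Ici.mpr hx.le) h
          rw [hεdef] at heq
          linarith
        · have h2 := hconv5 y h
          rw [← heq] at h2
          simpa using h2
      have h1 : f y = 1 := le_antisymm (hf1 y) (by linarith)
      simp [hgdef, h1]
    rw [setIntegral_congr_fun measurableSet_Ioi hzero]
    simp only [Pi.zero_apply, integral_zero, mul_zero]
    apply le_min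
    · positivity
    · positivity
  · -- case ε > 0
    set a := Real.sqrt ε with hadef
    have ha0 : 0 < a := Real.sqrt_pos.mpr hεpos
    have ha2 : a ^ 2 = ε := Real.sq_sqrt hε0
    have hax : a ≤ x := by
      rw [hadef]
      calc Real.sqrt ε ≤ Real.sqrt (x ^ 2) := Real.sqrt_le_sqrt hεx
        _ = x := Real.sqrt_sq hx.le
    have ha1 : a ≤ 1 := by
      rw [hadef]
      calc Real.sqrt ε ≤ Real.sqrt 1 := Real.sqrt_le_sqrt hε1
        _ = 1 := Real.sqrt_one
    set b := x / a with hbdef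
    have hb0 : 0 < b := by positivity
    have hxb : x ≤ b := by
      rw [hbdef, le_div_iff₀ ha0]
      nlinarith
    have Idecomp : ∫ y in Set.Ioi (0:ℝ), g y =
        (∫ y in Set.Ioc (0:ℝ) a, g y) + ((∫ y in Set.Ioc a x, g y)
        + ((∫ y in Set.Ioc x b, g y) + ∫ y in Set.Ioi b, g y)) := by
      rw [hsplit 0 a le_rfl ha0.le, hsplit a x ha0.le hax, hsplit x b hx.le hxb]
    have P2 : ∫ y in Set.Ioc a x, g y ≤ ε * (a⁻¹ - x⁻¹) := by
      calc ∫ y in Set.Ioc a x, g y ≤ ∫ y in Set.Ioc a x, ε * (y ^ 2)⁻¹ := by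
            apply setIntegral_mono_on
              ((hIocInt x).mono_set (Set.Ioc_subset_Ioc_left ha0.le))
              ((hinv_int a x ha0).const_mul ε) measurableSet_Ioc
            intro y hy
            have hy0 : 0 < y := ha0.trans hy.1
            have hfxy : f x ≤ f y :=
              hmono (Set.mem_Ici.mpr hy0.le) (Set.mem_Ici.mpr hx.le) hy.2
            show (1 - f y) / y ^ 2 ≤ ε * (y ^ 2)⁻¹
            rw [← div_eq_mul_inv]
            have hy2 : (0:ℝ) < y ^ 2 := by positivity
            gcongr
            rw [hεdef]; linarith
        _ = ε * (a⁻¹ - x⁻¹) := by rw [integral_const_mul, comp2 a x ha0 hax]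
    have P3 : ∫ y in Set.Ioc x b, g y ≤ ε / x ^ 2 * (b - x) := by
      calc ∫ y in Set.Ioc x b, g y ≤ ∫ _y in Set.Ioc x b, ε / x ^ 2 := by
            apply setIntegral_mono_on
              ((hIocInt b).mono_set (Set.Ioc_subset_Ioc_left hx.le))
              (integrableOn_const measure_Ioc_lt_top.ne) measurableSet_Ioc
            intro y hy
            have hy0 : 0 < y := hx.trans hy.1
            have hy2 : (0:ℝ) < y ^ 2 := by positivity
            show (1 - f y) / y ^ 2 ≤ ε / x ^ 2
            rw [div_le_iff₀ hy2]
            calc 1 - f y ≤ ε * y ^ 2 / x ^ 2 := hconv5 y hy.1.le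
              _ = ε / x ^ 2 * y ^ 2 := by ring
        _ = ε / x ^ 2 * (b - x) := by
            rw [setIntegral_const, smul_eq_mul, Real.volume_real_Ioc_of_le (by linarith),
              mul_comm]
    have Ibound : ∫ y in Set.Ioi (0:ℝ), g y ≤ 2 * (x + 1) / x * a := by
      rw [Idecomp]
      have key : a + (ε * (a⁻¹ - x⁻¹) + (ε / x ^ 2 * (b - x) + b⁻¹)) ≤ 2 * (x + 1) / x * a := by
        have hane : a ≠ 0 := ha0.ne'
        have hxne : x ≠ 0 := hx.ne'
        have e1 : ε * a⁻¹ = a := by rw [← ha2]; field_simp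
        have e2 : ε / x ^ 2 * (b - x) = a / x - ε / x := by
          rw [hbdef, ← ha2]; field_simp
        have e3 : b⁻¹ = a / x := by rw [hbdef, inv_div]
        have e4 : 2 * (x + 1) / x * a = a + (a + (a / x + a / x)) := by
          field_simp; ring
        rw [mul_sub, e1, e2, e3, e4, ← div_eq_mul_inv]
        have h5 : 0 ≤ ε / x := div_nonneg hε0 hx.le
        linarith
      refine le_trans ?_ key
      exact add_le_add (headB a ha0.le) (add_le_add P2 (add_le_add P3 (tailB b hb0)))
    have IboundB : ∫ y in Set.Ioi (0:ℝ), g y ≤ 2 := by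
      rw [hsplit 0 1 le_rfl zero_le_one]
      have := headB 1 zero_le_one
      have := tailB 1 one_pos
      norm_num at *
      linarith
    apply le_min
    · calc (2 / Real.pi) * ∫ y in Set.Ioi (0:ℝ), g y
          ≤ (2 / Real.pi) * (2 * (x + 1) / x * a) := by
            apply mul_le_mul_of_nonneg_left Ibound (by positivity)
        _ = 4 * (x + 1) / (Real.pi * x) * a := by
            field_simp
            ring
    · calc (2 / Real.pi) * ∫ y in Set.Ioi (0:ℝ), g y ≤ (2 / Real.pi) * 2 := by
            apply mul_le_mul_of_nonneg_left IboundB (by positivity)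
        _ = 4 / Real.pi := by ring
end

section
/- Let f₁, f₂ : ℝ → ℝ be even continuous functions with (1-x²)₊ ≤ f_i(x) ≤ 1 for all x. Then |c(f₁) - c(f₂)| ≤ C ‖ρ(f₁-f₂)‖_{L^∞}^{1/2} for some absolute constant C, where c(f) = (2/π)∫₀^∞ (1-f(y))/y² dy and ρ(x) = (1+|x|)^{-1/2}. -/
open MeasureTheory Set

private lemma rpow_neg_two_eq (y : ℝ) (hy : 0 < y) : y ^ (-2 : ℝ) = (y ^ 2)⁻¹ := by
  rw [Real.rpow_neg hy.le, show (2:ℝ) = ((2:ℕ):ℝ) by norm_num, Real.rpow_natCast]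

private lemma aux_meas {f : ℝ → ℝ} (hf : Continuous f) :
    AEStronglyMeasurable (fun y => (1 - f y) / y ^ 2) (volume : Measure ℝ) :=
  ((measurable_const.sub hf.measurable).div (measurable_id.pow_const 2)).aestronglyMeasurable

private lemma aux_integrableOn {f : ℝ → ℝ} (hf : Continuous f)
    (hb : ∀ x, max (1 - x ^ 2) 0 ≤ f x ∧ f x ≤ 1) :
    IntegrableOn (fun y => (1 - f y) / y ^ 2) (Set.Ioi (0 : ℝ)) := by
  rw [← Ioc_union_Ioi_eq_Ioi (zero_le_one (α := ℝ))]
  apply IntegrableOn.union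
  · apply Measure.integrableOn_of_bounded (M := 1) measure_Ioc_lt_top.ne (aux_meas hf)
    refine (ae_restrict_iff' measurableSet_Ioc).2 (ae_of_all _ fun y hy => ?_)
    have hy0 : 0 < y := hy.1
    have h1 : 0 ≤ 1 - f y := by linarith [(hb y).2]
    have h2 : 1 - f y ≤ y ^ 2 := by
      have := (hb y).1
      have := le_max_left (1 - y ^ 2) (0 : ℝ)
      linarith
    rw [Real.norm_eq_abs, abs_of_nonneg (div_nonneg h1 (by positivity))]
    rw [div_le_one (by positivity)]
    linarith
  · refine (integrableOn_Ioi_rpow_of_lt (show (-2 : ℝ) < -1 by norm_num) one_pos).mono'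
      ((aux_meas hf).restrict) ?_
    refine (ae_restrict_iff' measurableSet_Ioi).2 (ae_of_all _ fun y hy => ?_)
    have hy0 : (0 : ℝ) < y := lt_trans one_pos hy
    have h1 : 0 ≤ 1 - f y := by linarith [(hb y).2]
    have h2 : 1 - f y ≤ 1 := by
      have := le_max_right (1 - y ^ 2) (0 : ℝ)
      have := (hb y).1
      linarith
    rw [Real.norm_eq_abs, abs_of_nonneg (div_nonneg h1 (by positivity)),
      rpow_neg_two_eq y hy0, ← one_div, div_le_div_iff₀ (by positivity) (by positivity)]
    nlinarith

theorem cf_holder_continuous :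
    ∃ C : ℝ, 0 < C ∧ ∀ f₁ f₂ : ℝ → ℝ, Continuous f₁ → Continuous f₂ →
      (∀ x, f₁ (-x) = f₁ x) → (∀ x, f₂ (-x) = f₂ x) →
      (∀ x, max (1 - x ^ 2) 0 ≤ f₁ x ∧ f₁ x ≤ 1) →
      (∀ x, max (1 - x ^ 2) 0 ≤ f₂ x ∧ f₂ x ≤ 1) →
      ∀ δ : ℝ, 0 ≤ δ →
        (∀ x : ℝ, (1 + |x|) ^ (-(1 / 2) : ℝ) * |f₁ x - f₂ x| ≤ δ) →
        |(2 / Real.pi) * (∫ y in Set.Ioi (0 : ℝ), (1 - f₁ y) / y ^ 2) -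
          (2 / Real.pi) * (∫ y in Set.Ioi (0 : ℝ), (1 - f₂ y) / y ^ 2)| ≤
            C * Real.sqrt δ := by
  refine ⟨3, by norm_num, fun f₁ f₂ hf₁ hf₂ he₁ he₂ hb₁ hb₂ δ hδ0 hδ => ?_⟩
  have hπ : (0 : ℝ) < Real.pi := Real.pi_pos
  have hπ3 : (3 : ℝ) ≤ Real.pi := Real.pi_gt_three.le
  -- pointwise bound 1: |f₁ x - f₂ x| ≤ x ^ 2
  have key1 : ∀ x : ℝ, |f₁ x - f₂ x| ≤ x ^ 2 := by
    intro x
    have h1 := hb₁ x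
    have h2 := hb₂ x
    have hm := le_max_left (1 - x ^ 2) (0 : ℝ)
    rw [abs_sub_le_iff]
    constructor <;> nlinarith
  -- pointwise bound 2: |f₁ x - f₂ x| ≤ δ * (1 + x) ^ (1/2 : ℝ) for 0 ≤ x
  have key2 : ∀ x : ℝ, 0 ≤ x → |f₁ x - f₂ x| ≤ δ * (1 + x) ^ ((1 : ℝ)/2) := by
    intro x hx
    have h1x : (0 : ℝ) < 1 + x := by linarith
    have hp : (0 : ℝ) < (1 + x) ^ ((1 : ℝ)/2) := Real.rpow_pos_of_pos h1x _
    have := hδ x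
    rw [abs_of_nonneg hx] at this
    have hneg : (1 + x) ^ (-(1/2) : ℝ) = ((1 + x) ^ ((1 : ℝ)/2))⁻¹ := by
      rw [← Real.rpow_neg h1x.le]
    rw [hneg] at this
    calc |f₁ x - f₂ x| = (1 + x) ^ ((1 : ℝ)/2) * (((1 + x) ^ ((1 : ℝ)/2))⁻¹ * |f₁ x - f₂ x|) := by
          field_simp
      _ ≤ (1 + x) ^ ((1 : ℝ)/2) * δ := by
          exact mul_le_mul_of_nonneg_left this hp.le
      _ = δ * (1 + x) ^ ((1 : ℝ)/2) := mul_comm _ _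
  -- the difference of the integrals
  have hi₁ := aux_integrableOn hf₁ hb₁
  have hi₂ := aux_integrableOn hf₂ hb₂
  set A := ∫ y in Set.Ioi (0 : ℝ), (1 - f₁ y) / y ^ 2 with hA
  set B := ∫ y in Set.Ioi (0 : ℝ), (1 - f₂ y) / y ^ 2 with hB
  have hAB : A - B = ∫ y in Set.Ioi (0 : ℝ), (f₂ y - f₁ y) / y ^ 2 := by
    rw [hA, hB, ← integral_sub hi₁ hi₂]
    refine setIntegral_congr_fun measurableSet_Ioi fun y hy => ?_
    beta_reduce
    rw [div_sub_div_same]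
    ring_nf
  have hih : IntegrableOn (fun y => (f₂ y - f₁ y) / y ^ 2) (Set.Ioi (0 : ℝ)) := by
    have hsub : IntegrableOn (fun y => (1 - f₁ y) / y ^ 2 - (1 - f₂ y) / y ^ 2)
        (Set.Ioi (0 : ℝ)) := hi₁.sub hi₂
    refine hsub.congr_fun (fun y hy => ?_) measurableSet_Ioi
    beta_reduce
    rw [div_sub_div_same]
    ring_nf
  -- key estimate: for any 0 < s ≤ 1, if |f₁ - f₂| ≤ M on (s, ∞) pointwise bound...
  -- we prove |A - B| ≤ 4 * sqrt δ when δ ≤ 1, and |A - B| ≤ 2 always.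
  rw [← mul_sub, abs_mul, abs_of_pos (by positivity : (0 : ℝ) < 2 / Real.pi)]
  -- general splitting estimate
  have split : ∀ s : ℝ, 0 < s →
      |A - B| ≤ s + |∫ y in Set.Ioi s, (f₂ y - f₁ y) / y ^ 2| := by
    intro s hs
    rw [hAB, ← Ioc_union_Ioi_eq_Ioi hs.le,
      setIntegral_union (Ioc_disjoint_Ioi le_rfl) measurableSet_Ioi
        (hih.mono_set (by rw [← Ioc_union_Ioi_eq_Ioi hs.le]; exact subset_union_left))
        (hih.mono_set (by rw [← Ioc_union_Ioi_eq_Ioi hs.le]; exact subset_union_right))]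
    refine (abs_add_le _ _).trans ?_
    gcongr
    have : ‖∫ y in Set.Ioc (0:ℝ) s, (f₂ y - f₁ y) / y ^ 2‖ ≤ 1 * (volume (Set.Ioc (0:ℝ) s)).toReal := by
      refine norm_setIntegral_le_of_norm_le_const
        (f := fun y => (f₂ y - f₁ y) / y ^ 2) measure_Ioc_lt_top
        fun y hy => ?_
      have hy0 : 0 < y := hy.1
      rw [Real.norm_eq_abs, abs_div, abs_of_nonneg (by positivity : (0:ℝ) ≤ y ^ 2),
        div_le_one (by positivity)]
      have := key1 y
      rw [abs_sub_comm] at this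
      exact this
    rw [Real.norm_eq_abs] at this
    simpa [Real.volume_Ioc, ENNReal.toReal_ofReal hs.le] using this
  rcases le_or_gt 1 δ with hδ1 | hδ1
  · -- case δ ≥ 1 : use split at s = 1 and bound by y⁻² on (1, ∞)
    have h2 : |∫ y in Set.Ioi (1:ℝ), (f₂ y - f₁ y) / y ^ 2| ≤ 1 := by
      have hmaj : IntegrableOn (fun y : ℝ => y ^ (-2 : ℝ)) (Set.Ioi (1:ℝ)) :=
        integrableOn_Ioi_rpow_of_lt (by norm_num) one_pos
      have hbnd : ∀ᵐ y ∂(volume.restrict (Set.Ioi (1:ℝ))),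
          ‖(f₂ y - f₁ y) / y ^ 2‖ ≤ y ^ (-2 : ℝ) := by
        refine (ae_restrict_iff' measurableSet_Ioi).2 (ae_of_all _ fun y hy => ?_)
        have hy0 : (0:ℝ) < y := lt_trans one_pos hy
        rw [Real.norm_eq_abs, abs_div, abs_of_nonneg (by positivity : (0:ℝ) ≤ y ^ 2),
          rpow_neg_two_eq y hy0, ← one_div, div_le_div_iff₀ (by positivity) (by positivity)]
        have hle : |f₂ y - f₁ y| ≤ 1 := by
          have h1 := hb₁ y
          have h2 := hb₂ y
          have hm := le_max_right (1 - y ^ 2) (0:ℝ)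
          rw [abs_sub_le_iff]
          constructor <;> nlinarith
        nlinarith [abs_nonneg (f₂ y - f₁ y)]
      have h := norm_integral_le_of_norm_le hmaj hbnd
      rw [← Real.norm_eq_abs]
      refine h.trans ?_
      rw [integral_Ioi_rpow_of_lt (by norm_num) one_pos]
      norm_num
    have hsq : (1 : ℝ) ≤ Real.sqrt δ := by
      rw [show (1:ℝ) = Real.sqrt 1 by simp]
      exact Real.sqrt_le_sqrt hδ1
    have := (split 1 one_pos).trans (by linarith : (1:ℝ) + |∫ y in Set.Ioi (1:ℝ), (f₂ y - f₁ y) / y ^ 2| ≤ 2)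
    calc 2 / Real.pi * |A - B| ≤ 2 / Real.pi * 2 := by
          exact mul_le_mul_of_nonneg_left this (by positivity)
      _ ≤ 2 := by
          rw [div_mul_eq_mul_div, div_le_iff₀ hπ]
          linarith
      _ ≤ 3 * Real.sqrt δ := by nlinarith
  · -- case δ < 1
    rcases eq_or_lt_of_le hδ0 with hδe | hδpos
    · -- δ = 0 : f₁ = f₂
      have : A = B := by
        rw [hA, hB]
        congr 1
        funext y
        have h := hδ y
        rw [← hδe] at h
        have hp : (0:ℝ) < (1 + |y|) ^ (-(1/2) : ℝ) :=
          Real.rpow_pos_of_pos (by positivity) _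
        have : |f₁ y - f₂ y| ≤ 0 := by
          nlinarith [abs_nonneg (f₁ y - f₂ y)]
        have : f₁ y = f₂ y := by
          have := abs_nonpos_iff.mp this
          linarith [sub_eq_zero.mp this]
        rw [this]
      rw [this, sub_self, abs_zero, mul_zero]
      positivity
    · set s := Real.sqrt δ with hsdef
      have hs : 0 < s := Real.sqrt_pos.2 hδpos
      have hs2 : s ^ 2 = δ := Real.sq_sqrt hδ0
      have hs1 : s ≤ 1 := by nlinarith
      -- bound on (s, ∞)
      have hmaj : IntegrableOn (fun y : ℝ => δ * (y ^ (-2 : ℝ) + y ^ (-(3/2) : ℝ)))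
          (Set.Ioi s) := by
        exact (((integrableOn_Ioi_rpow_of_lt (by norm_num) hs).add
          (integrableOn_Ioi_rpow_of_lt (by norm_num) hs)).const_mul δ)
      have hbound : ∀ y ∈ Set.Ioi s, ‖(f₂ y - f₁ y) / y ^ 2‖ ≤
          δ * (y ^ (-2 : ℝ) + y ^ (-(3/2) : ℝ)) := by
        intro y hy
        have hy0 : 0 < y := lt_trans hs hy
        have hk := key2 y hy0.le
        rw [abs_sub_comm] at hk
        have hle : (1 + y) ^ ((1:ℝ)/2) ≤ 1 + y ^ ((1:ℝ)/2) := by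
          have h1 : (1 + y) ^ ((1:ℝ)/2) = Real.sqrt (1 + y) := by
            rw [Real.sqrt_eq_rpow]
          have h2 : y ^ ((1:ℝ)/2) = Real.sqrt y := by rw [Real.sqrt_eq_rpow]
          rw [h1, h2]
          have hsy := Real.sq_sqrt hy0.le
          have hsy0 := Real.sqrt_nonneg y
          nlinarith [Real.sq_sqrt (by linarith : (0:ℝ) ≤ 1 + y),
            Real.sqrt_nonneg (1 + y), Real.sqrt_le_sqrt (by nlinarith : 1 + y ≤ (1 + Real.sqrt y)^2),
            Real.sqrt_sq (by positivity : (0:ℝ) ≤ 1 + Real.sqrt y)]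
        rw [Real.norm_eq_abs, abs_div, abs_of_nonneg (by positivity : (0:ℝ) ≤ y ^ 2),
          div_le_iff₀ (by positivity)]
        have hrw : (y ^ (-2 : ℝ) + y ^ (-(3/2) : ℝ)) * y ^ 2 = 1 + y ^ ((1:ℝ)/2) := by
          rw [rpow_neg_two_eq y hy0]
          have : y ^ (-(3/2) : ℝ) * y ^ 2 = y ^ ((1:ℝ)/2) := by
            rw [show (y : ℝ) ^ 2 = y ^ ((2:ℝ)) by rw [← Real.rpow_natCast y 2]; norm_num,
              ← Real.rpow_add hy0]
            norm_num
          field_simp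
          linarith [this]
        calc |f₂ y - f₁ y| ≤ δ * (1 + y) ^ ((1:ℝ)/2) := hk
          _ ≤ δ * (1 + y ^ ((1:ℝ)/2)) := by
              exact mul_le_mul_of_nonneg_left hle hδ0
          _ = δ * (y ^ (-2 : ℝ) + y ^ (-(3/2) : ℝ)) * y ^ 2 := by rw [mul_assoc, hrw]
      have htail : |∫ y in Set.Ioi s, (f₂ y - f₁ y) / y ^ 2| ≤ 3 * s := by
        have h1 := norm_integral_le_of_norm_le hmaj
          ((ae_restrict_iff' measurableSet_Ioi).2 (ae_of_all _ hbound))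
        refine h1.trans ?_
        rw [integral_const_mul, integral_add (integrableOn_Ioi_rpow_of_lt (by norm_num) hs)
          (integrableOn_Ioi_rpow_of_lt (by norm_num) hs),
          integral_Ioi_rpow_of_lt (by norm_num) hs, integral_Ioi_rpow_of_lt (by norm_num) hs]
        have e1 : -s ^ ((-2:ℝ) + 1) / (-2 + 1) = s⁻¹ := by
          norm_num
          rw [Real.rpow_neg_one]
        have e2 : -s ^ ((-(3/2):ℝ) + 1) / (-(3/2) + 1) = 2 * s ^ (-(1/2) : ℝ) := by
          norm_num
          ring
        rw [e1, e2]
        have hd1 : δ * s⁻¹ = s := by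
          rw [← hs2]; field_simp
        have hd2 : δ * (2 * s ^ (-(1/2) : ℝ)) ≤ 2 * s := by
          have : δ * s ^ (-(1/2) : ℝ) = s ^ ((3:ℝ)/2) := by
            rw [← hs2, show (s:ℝ) ^ 2 = s ^ ((2:ℝ)) by rw [← Real.rpow_natCast s 2]; norm_num,
              ← Real.rpow_add hs]
            norm_num
          have h32 : s ^ ((3:ℝ)/2) ≤ s := by
            calc s ^ ((3:ℝ)/2) ≤ s ^ (1:ℝ) :=
                Real.rpow_le_rpow_of_exponent_ge hs hs1 (by norm_num)
              _ = s := Real.rpow_one s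
          calc δ * (2 * s ^ (-(1/2) : ℝ)) = 2 * (δ * s ^ (-(1/2) : ℝ)) := by ring
            _ = 2 * s ^ ((3:ℝ)/2) := by rw [this]
            _ ≤ 2 * s := by linarith
        calc δ * (s⁻¹ + 2 * s ^ (-(1/2) : ℝ)) = δ * s⁻¹ + δ * (2 * s ^ (-(1/2) : ℝ)) := by ring
          _ ≤ s + 2 * s := by rw [hd1]; linarith
          _ = 3 * s := by ring
      have hABle : |A - B| ≤ 4 * s := by
        have := split s hs
        linarith
      calc 2 / Real.pi * |A - B| ≤ 2 / Real.pi * (4 * s) :=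
            mul_le_mul_of_nonneg_left hABle (by positivity)
        _ = 8 / Real.pi * s := by ring
        _ ≤ 3 * s := by
            have : 8 / Real.pi ≤ 3 := by
              rw [div_le_iff₀ hπ]; linarith
            nlinarith
end

section
/- Let f : ℝ → ℝ be even, with f non-increasing on [0,∞), f(0) = 1, (1-x²)₊ ≤ f ≤ 1, s ↦ f(√s) convex, and f'₋(1/2) ≤ -η for some η ∈ (0,1). Then f(x) ≤ max{1 - η x², 1 - η/4} for all x ∈ ℝ. -/
theorem upper_envelope (f : ℝ → ℝ) (η : ℝ) (hη : 0 < η) (hη1 : η < 1)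
    (heven : ∀ x, f (-x) = f x) (h0 : f 0 = 1)
    (hbound : ∀ x, max (1 - x ^ 2) 0 ≤ f x ∧ f x ≤ 1)
    (hmono : AntitoneOn f (Set.Ici 0))
    (hconv : ConvexOn ℝ (Set.Ici 0) (fun s => f (Real.sqrt s)))
    (d : ℝ) (hd : HasDerivWithinAt f d (Set.Iio ((1 : ℝ) / 2)) ((1 : ℝ) / 2))
    (hdη : d ≤ -η) :
    ∀ x : ℝ, f x ≤ max (1 - η * x ^ 2) (1 - η / 4) := by
  set g : ℝ → ℝ := fun s => f (Real.sqrt s) with hg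
  have hsqrt14 : Real.sqrt (1/4) = 1/2 := by
    rw [show (1/4 : ℝ) = (1/2)^2 by norm_num, Real.sqrt_sq (by norm_num)]
  have hs : HasDerivAt Real.sqrt (1 / (2 * Real.sqrt (1/4))) (1/4) :=
    Real.hasDerivAt_sqrt (by norm_num)
  rw [hsqrt14] at hs
  have hs1 : HasDerivAt Real.sqrt 1 (1/4) := by
    convert hs using 1; norm_num
  have hmaps : Set.MapsTo Real.sqrt (Set.Iio (1/4 : ℝ)) (Set.Iio ((1:ℝ)/2)) := by
    intro s hs'
    simp only [Set.mem_Iio] at hs' ⊢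
    rw [Real.sqrt_lt' (by norm_num : (0:ℝ) < 1/2)]
    norm_num; linarith
  have hd14 : HasDerivWithinAt f d (Set.Iio ((1:ℝ)/2)) (Real.sqrt (1/4)) := by
    rwa [hsqrt14]
  have hgd : HasDerivWithinAt g d (Set.Iio (1/4 : ℝ)) (1/4) := by
    have := HasDerivWithinAt.comp (1/4 : ℝ) hd14 (hs1.hasDerivWithinAt) hmaps
    rw [mul_one] at this; exact this
  -- slope inequality : (g (1/4) - g 0) / (1/4 - 0) ≤ d
  have hslope : (g (1/4) - g 0) / ((1:ℝ)/4 - 0) ≤ d := by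
    have htend : Filter.Tendsto (slope g (1/4)) (nhdsWithin (1/4 : ℝ) (Set.Iio (1/4))) (nhds d) := by
      have := (hasDerivWithinAt_iff_tendsto_slope).mp hgd
      rwa [Set.diff_singleton_eq_self (by simp)] at this
    refine ge_of_tendsto htend ?_
    filter_upwards [Ioo_mem_nhdsLT_of_mem (by constructor <;> norm_num :
      (1/4 : ℝ) ∈ Set.Ioc (0 : ℝ) (1/4))] with s hs'
    have h3 := hconv.secant_mono_aux3 (x := 0) (y := s) (z := 1/4)
      (by simp) (by norm_num) hs'.1 hs'.2
    rw [slope_def_field]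
    have heq : (g s - g (1/4)) / (s - 1/4) = (g (1/4) - g s) / (1/4 - s) := by
      rw [← neg_div_neg_eq]; ring_nf
    rw [heq]
    exact h3
  have hg0 : g 0 = 1 := by simp [hg, Real.sqrt_zero, h0]
  rw [hg0] at hslope
  have hg14 : g (1/4) ≤ 1 - η / 4 := by
    have h' : (g (1/4) - 1) / ((1:ℝ)/4 - 0) ≤ -η := le_trans hslope hdη
    rw [div_le_iff₀ (by norm_num)] at h'
    linarith
  have key : ∀ x : ℝ, 0 ≤ x → f x ≤ max (1 - η * x ^ 2) (1 - η / 4) := by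
    intro x hx
    rcases le_or_gt x (1/2) with hx2 | hx2
    · refine le_max_of_le_left ?_
      have hfg : f x = g (x^2) := by rw [hg]; simp [Real.sqrt_sq hx]
      have hs2 : x^2 ≤ 1/4 := by nlinarith
      have hcomb := hconv.2 (Set.mem_Ici.mpr (le_refl (0:ℝ)))
        (Set.mem_Ici.mpr (by norm_num : (0:ℝ) ≤ 1/4))
        (show (0:ℝ) ≤ 1 - 4 * x^2 by linarith)
        (show (0:ℝ) ≤ 4 * x^2 by positivity)
        (show (1 - 4 * x^2) + 4 * x^2 = 1 by ring)
      simp only [smul_eq_mul, mul_zero, zero_add] at hcomb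
      have harg : (4 * x^2) * ((1:ℝ)/4) = x^2 := by ring
      rw [harg, hg0] at hcomb
      rw [hfg]
      calc g (x^2) ≤ (1 - 4*x^2) * 1 + 4*x^2 * g (1/4) := hcomb
        _ ≤ (1 - 4*x^2) * 1 + 4*x^2 * (1 - η/4) := by nlinarith [sq_nonneg x]
        _ = 1 - η * x^2 := by ring
    · refine le_max_of_le_right ?_
      have hle : f x ≤ f (1/2) := hmono (by norm_num) (Set.mem_Ici.mpr hx) hx2.le
      have hf12 : g (1/4) = f (1/2) := by
        show f (Real.sqrt (1/4)) = f (1/2)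
        rw [hsqrt14]
      linarith
  intro x
  rcases le_or_gt 0 x with hx | hx
  · exact key x hx
  · have := key (-x) (by linarith)
    rw [heven x] at this
    simpa using this
end

section
/- For f_m(x) = (1-x²)₊ and for every x ≥ 1, one has (1/π)∫₀^∞ f_m(y) · (y/x) ln|(x+y)/(x-y)| dy ≥ (4/(15π)) x^{-2}. -/
open MeasureTheory

/-- Key inequality: `2u ≤ log((1+u)/(1-u))` for `0 ≤ u < 1`. -/
lemma two_mul_le_log_ratio {u : ℝ} (h0 : 0 ≤ u) (h1 : u < 1) :
    2 * u ≤ Real.log ((1 + u) / (1 - u)) := by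
  set g : ℝ → ℝ := fun w => Real.log (1 + w) - Real.log (1 - w) - 2 * w with hg
  have hder : ∀ v ∈ Set.Ico (0 : ℝ) 1,
      HasDerivAt g ((1 + v)⁻¹ + (1 - v)⁻¹ - 2) v := by
    intro v hv
    have hv1 : (0:ℝ) < 1 + v := by cases hv with | intro a b => linarith
    have hv2 : (0:ℝ) < 1 - v := by cases hv with | intro a b => linarith
    have h1 : HasDerivAt (fun w : ℝ => Real.log (1 + w)) ((1 + v)⁻¹) v := by
      have := (Real.hasDerivAt_log hv1.ne').comp v
        ((hasDerivAt_id v).const_add 1)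
      simpa [Function.comp_def] using this
    have h2 : HasDerivAt (fun w : ℝ => Real.log (1 - w)) (-(1 - v)⁻¹) v := by
      have := (Real.hasDerivAt_log hv2.ne').comp v
        ((hasDerivAt_id v).const_sub 1)
      simpa [Function.comp_def] using this
    have h3 : HasDerivAt (fun w : ℝ => 2 * w) 2 v := by
      simpa using (hasDerivAt_id v).const_mul 2
    have := (h1.sub h2).sub h3
    convert this using 1
    · rfl
    · rfl
    · rfl
    · ring
  have hmono : MonotoneOn g (Set.Ico (0:ℝ) 1) := by
    apply monotoneOn_of_deriv_nonneg (convex_Ico 0 1)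
    · intro v hv
      exact (hder v hv).continuousAt.continuousWithinAt
    · intro v hv
      rw [interior_Ico] at hv
      exact ((hder v (Set.mem_Ico_of_Ioo hv)).differentiableAt).differentiableWithinAt
    · intro v hv
      rw [interior_Ico] at hv
      rw [(hder v (Set.mem_Ico_of_Ioo hv)).deriv]
      obtain ⟨hv0, hv1⟩ := hv
      have hv2 : (0:ℝ) < 1 - v := by linarith
      have hv3 : (0:ℝ) < 1 + v := by linarith
      rw [sub_nonneg, inv_add_inv hv3.ne' hv2.ne']
      rw [le_div_iff₀ (by positivity)]
      nlinarith
  have h := hmono (Set.mem_Ico.mpr ⟨le_refl 0, one_pos⟩) (Set.mem_Ico.mpr ⟨h0, h1⟩) h0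
  have hg0 : g 0 = 0 := by simp [hg]
  rw [hg0] at h
  have hlog : Real.log ((1 + u) / (1 - u)) = Real.log (1 + u) - Real.log (1 - u) :=
    Real.log_div (by linarith) (by linarith)
  rw [hlog]
  simp only [hg] at h
  linarith

theorem fm_T_lower_bound (x : ℝ) (hx : 1 ≤ x) :
    (1 / Real.pi) * (∫ y in Set.Ioi (0 : ℝ),
        max (1 - y ^ 2) 0 * ((y / x) * Real.log (|(x + y) / (x - y)|))) ≥
      (4 / (15 * Real.pi)) / x ^ 2 := by
  have hx0 : (0:ℝ) < x := by linarith
  set F : ℝ → ℝ := fun y => max (1 - y ^ 2) 0 * ((y / x) * Real.log (|(x + y) / (x - y)|))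
    with hF
  set G : ℝ → ℝ := fun y => max (1 - y ^ 2) 0 * (2 * y ^ 2 / x ^ 2) with hGdef
  -- measurability
  have hFm : Measurable F := by
    apply Measurable.mul
    · exact (measurable_const.sub (measurable_id.pow_const 2)).max measurable_const
    · exact (measurable_id.div_const x).mul
        (Real.measurable_log.comp
          (((measurable_const.add measurable_id).div (measurable_const.sub measurable_id)).abs))
  -- F vanishes for y > 1
  have hF1 : ∀ y ∈ Set.Ioi (1:ℝ), F y = 0 := by
    intro y hy
    have : max (1 - y ^ 2) 0 = 0 := max_eq_right (by nlinarith [Set.mem_Ioi.mp hy])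
    simp [hF, this]
  -- bound on Ioc 0 1
  have hbound : ∀ y ∈ Set.Ioc (0:ℝ) 1, ‖F y‖ ≤ 4 := by
    intro y hy
    obtain ⟨hy0, hy1⟩ := hy
    rcases le_or_gt (1 - y ^ 2) 0 with hc | hc
    · simp [hF, max_eq_right hc]
    · have hy1' : y < 1 := by nlinarith
      have hxy : 0 < x - y := by linarith
      have hq : 0 < (x + y) / (x - y) := div_pos (by linarith) hxy
      have habs : |(x + y) / (x - y)| = (x + y) / (x - y) := abs_of_pos hq
      have h1le : (1:ℝ) ≤ (x + y) / (x - y) := (one_le_div hxy).mpr (by linarith)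
      have hlog0 : 0 ≤ Real.log ((x + y) / (x - y)) := Real.log_nonneg h1le
      have hFy : F y = (1 - y ^ 2) * ((y / x) * Real.log ((x + y) / (x - y))) := by
        simp [hF, habs, max_eq_left hc.le]
      have hFpos : 0 ≤ F y := by
        rw [hFy]
        have : 0 ≤ y / x := by positivity
        positivity
      rw [Real.norm_eq_abs, abs_of_nonneg hFpos, hFy]
      have hlogle : Real.log ((x + y) / (x - y)) ≤ (x + y) / (x - y) - 1 :=
        Real.log_le_sub_one_of_pos hq
      have step : (1 - y ^ 2) * ((y / x) * Real.log ((x + y) / (x - y)))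
          ≤ (1 - y ^ 2) * ((y / x) * ((x + y) / (x - y) - 1)) := by
        apply mul_le_mul_of_nonneg_left _ hc.le
        apply mul_le_mul_of_nonneg_left hlogle (by positivity)
      refine step.trans ?_
      rw [div_sub_one hxy.ne', show x + y - (x - y) = 2 * y by ring]
      rw [div_mul_div_comm, mul_div_assoc']
      rw [div_le_iff₀ (by positivity)]
      nlinarith [mul_pos hy0 hy0, mul_pos hxy hx0]
  have hvol : volume (Set.Ioc (0:ℝ) 1) ≠ ⊤ := (measure_Ioc_lt_top).ne
  have hIntF : IntegrableOn F (Set.Ioc (0:ℝ) 1) :=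
    Measure.integrableOn_of_bounded hvol hFm.aestronglyMeasurable
      ((ae_restrict_iff' measurableSet_Ioc).mpr (Filter.Eventually.of_forall hbound))
  have hIntF1 : IntegrableOn F (Set.Ioi (1:ℝ)) :=
    (integrableOn_zero).congr_fun (fun y hy => (hF1 y hy).symm) measurableSet_Ioi
  -- split the integral
  have hsplit : (∫ y in Set.Ioi (0:ℝ), F y) = ∫ y in Set.Ioc (0:ℝ) 1, F y := by
    rw [← Set.Ioc_union_Ioi_eq_Ioi (zero_le_one (α := ℝ))]
    rw [setIntegral_union (Set.Ioc_disjoint_Ioi le_rfl) measurableSet_Ioi hIntF hIntF1]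
    rw [setIntegral_congr_fun measurableSet_Ioi hF1]
    simp
  -- pointwise lower bound on Ioc 0 1
  have hlow : ∀ y ∈ Set.Ioc (0:ℝ) 1, G y ≤ F y := by
    intro y hy
    obtain ⟨hy0, hy1⟩ := hy
    rcases le_or_gt (1 - y ^ 2) 0 with hc | hc
    · simp [hF, hGdef, max_eq_right hc]
    · have hy1' : y < 1 := by nlinarith
      have hxy : 0 < x - y := by linarith
      have hq : 0 < (x + y) / (x - y) := div_pos (by linarith) hxy
      have habs : |(x + y) / (x - y)| = (x + y) / (x - y) := abs_of_pos hq
      have hu0 : (0:ℝ) ≤ y / x := by positivity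
      have hu1 : y / x < 1 := (div_lt_one hx0).mpr (by linarith)
      have hkey := two_mul_le_log_ratio hu0 hu1
      have harg : (1 + y / x) / (1 - y / x) = (x + y) / (x - y) := by
        have h1 : (1 : ℝ) + y / x = (x + y) / x := by field_simp
        have h2 : (1 : ℝ) - y / x = (x - y) / x := by field_simp
        rw [h1, h2, div_div_div_cancel_right₀ hx0.ne']
      rw [harg] at hkey
      simp only [hF, hGdef, habs, max_eq_left hc.le]
      have : 2 * y ^ 2 / x ^ 2 ≤ (y / x) * Real.log ((x + y) / (x - y)) := by
        have h2 : 2 * (y / x) ≤ Real.log ((x + y) / (x - y)) := hkey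
        have := mul_le_mul_of_nonneg_left h2 hu0
        calc 2 * y ^ 2 / x ^ 2 = (y / x) * (2 * (y / x)) := by field_simp
          _ ≤ (y / x) * Real.log ((x + y) / (x - y)) := this
      exact mul_le_mul_of_nonneg_left this hc.le
  -- integrability of G
  have hGcont : Continuous G := by
    apply Continuous.mul
    · exact (continuous_const.sub (continuous_pow 2)).max continuous_const
    · exact (continuous_const.mul (continuous_pow 2)).div_const _
  have hIntG : IntegrableOn G (Set.Ioc (0:ℝ) 1) := hGcont.integrableOn_Ioc
  have hmono : (∫ y in Set.Ioc (0:ℝ) 1, G y) ≤ ∫ y in Set.Ioc (0:ℝ) 1, F y :=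
    setIntegral_mono_on hIntG hIntF measurableSet_Ioc hlow
  -- compute the integral of G
  have hGval : (∫ y in Set.Ioc (0:ℝ) 1, G y) = (4 / 15) / x ^ 2 := by
    have hcongr : ∀ y ∈ Set.Ioc (0:ℝ) 1, G y = (2 * y ^ 2 - 2 * y ^ 4) * (x ^ 2)⁻¹ := by
      intro y hy
      obtain ⟨hy0, hy1⟩ := hy
      have : max (1 - y ^ 2) 0 = 1 - y ^ 2 := max_eq_left (by nlinarith)
      simp only [hGdef, this]
      field_simp
    rw [setIntegral_congr_fun measurableSet_Ioc hcongr]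
    rw [← intervalIntegral.integral_of_le (zero_le_one (α := ℝ))]
    rw [intervalIntegral.integral_mul_const]
    have : (∫ y in (0:ℝ)..1, (2 * y ^ 2 - 2 * y ^ 4)) = 4 / 15 := by
      have h1 : IntervalIntegrable (fun y : ℝ => 2 * y ^ 2) volume 0 1 :=
        (continuous_const.mul (continuous_pow 2)).intervalIntegrable 0 1
      have h2 : IntervalIntegrable (fun y : ℝ => 2 * y ^ 4) volume 0 1 :=
        (continuous_const.mul (continuous_pow 4)).intervalIntegrable 0 1
      rw [intervalIntegral.integral_sub h1 h2]
      simp [intervalIntegral.integral_const_mul, integral_pow]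
      norm_num
    rw [this]
    field_simp
  rw [ge_iff_le, hsplit]
  have hfinal : (4 / 15) / x ^ 2 ≤ ∫ y in Set.Ioc (0:ℝ) 1, F y := hGval ▸ hmono
  have hpi : (0:ℝ) < Real.pi := Real.pi_pos
  calc (4 / (15 * Real.pi)) / x ^ 2 = (1 / Real.pi) * ((4 / 15) / x ^ 2) := by
        field_simp
    _ ≤ (1 / Real.pi) * ∫ y in Set.Ioc (0:ℝ) 1, F y :=
        mul_le_mul_of_nonneg_left hfinal (by positivity)
end

section
/- Let f : ℝ → ℝ be even, non-increasing and nonnegative on [0,∞), with s ↦ f(√s) convex, (1-x²)₊ ≤ f ≤ 1, and suppose b₂(f) := (2/π)∫₀^∞ y² f(y) dy < ∞ and b(f) := (2/π)∫₀^∞ f(y) dy < ∞. Then for all x > 0: (1/π)∫₀^∞ f(y) (y/x) ln|(x+y)/(x-y)| dy ≤ 3 b₂(f)/x². -/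
open MeasureTheory

private lemma myq_lower {t : ℝ} (h0 : 0 ≤ t) (h1 : t < 1) :
    2 * t ≤ Real.log (1 + t) - Real.log (1 - t) := by
  set q : ℝ → ℝ := fun s => Real.log (1 + s) - Real.log (1 - s) - 2 * s with hq
  have hder : ∀ s ∈ Set.Ioo (0:ℝ) 1, HasDerivAt q (1/(1+s) + 1/(1-s) - 2) s := by
    intro s hs
    have h1s : (1:ℝ) + s ≠ 0 := by nlinarith [hs.1]
    have h2s : (1:ℝ) - s ≠ 0 := by nlinarith [hs.2]
    have d1 : HasDerivAt (fun u : ℝ => Real.log (1 + u)) (1/(1+s)) s := by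
      simpa using (((hasDerivAt_id s).const_add 1).log h1s)
    have d2 : HasDerivAt (fun u : ℝ => Real.log (1 - u)) ((-1)/(1-s)) s := by
      simpa using (((hasDerivAt_id s).const_sub 1).log h2s)
    have d3 : HasDerivAt (fun u : ℝ => 2 * u) 2 s := by
      simpa using (hasDerivAt_id s).const_mul 2
    have := (d1.sub d2).sub d3
    refine this.congr_deriv ?_
    field_simp
    ring
  have hcont : ContinuousOn q (Set.Ico (0:ℝ) 1) := by
    apply ContinuousOn.sub
    apply ContinuousOn.sub
    · exact ((continuous_const.add continuous_id).continuousOn).log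
        (fun s hs => by have := hs.1; intro h; simp only [Pi.add_apply, id_eq] at h; nlinarith)
    · exact ((continuous_const.sub continuous_id).continuousOn).log
        (fun s hs => by have := hs.2; intro h; simp only [Pi.sub_apply, id_eq] at h; nlinarith)
    · exact (continuous_const.mul continuous_id).continuousOn
  have hmono : MonotoneOn q (Set.Ico (0:ℝ) 1) := by
    apply monotoneOn_of_deriv_nonneg (convex_Ico 0 1) hcont
    · intro s hs
      rw [interior_Ico] at hs
      exact (hder s hs).differentiableAt.differentiableWithinAt
    · intro s hs
      rw [interior_Ico] at hs
      rw [(hder s hs).deriv]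
      have h1s : (0:ℝ) < 1 + s := by nlinarith [hs.1]
      have h2s : (0:ℝ) < 1 - s := by nlinarith [hs.2]
      have : 1/(1+s) + 1/(1-s) - 2 = 2*s^2/((1+s)*(1-s)) := by field_simp; ring
      rw [this]; positivity
  have h0' : q 0 ≤ q t := hmono (by constructor <;> norm_num) ⟨h0, h1⟩ h0
  have : q 0 = 0 := by simp [hq]
  rw [this] at h0'
  simp only [hq] at h0'
  linarith

private lemma myq_upper {t : ℝ} (h1 : 1 < t) : Real.log (t+1) - Real.log (t-1) ≤ 2*t/(t^2-1) := by
  have ht1 : (0:ℝ) < t - 1 := by linarith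
  have ht2 : (0:ℝ) < t + 1 := by linarith
  have hu : (1:ℝ) < (t+1)/(t-1) := by rw [lt_div_iff₀ ht1]; linarith
  have hu0 : (0:ℝ) < (t+1)/(t-1) := by positivity
  have hlu : 0 < Real.log ((t+1)/(t-1)) := Real.log_pos hu
  have hs : Real.log ((t+1)/(t-1)) ≤ Real.sinh (Real.log ((t+1)/(t-1))) :=
    (Real.self_lt_sinh_iff.mpr hlu).le
  rw [Real.sinh_log hu0] at hs
  rw [Real.log_div (ne_of_gt ht2) (ne_of_gt ht1)] at hs
  have hne : t^2 - 1 ≠ 0 := by nlinarith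
  have he : ((t+1)/(t-1) - ((t+1)/(t-1))⁻¹)/2 = 2*t/(t^2-1) := by
    rw [inv_div]
    field_simp
    ring
  linarith [he ▸ hs]

noncomputable def Gf (x y : ℝ) : ℝ :=
  (y^2 - x^2)/(2*x) * Real.log (x + y) + (y + x)/(2*x) * ((x - y) * Real.log (x - y))
    + y - 2*y^3/x^2

private lemma Gf_eq {x : ℝ} (hx : 0 < x) {y : ℝ} :
    Gf x y = (y^2-x^2)/(2*x) * (Real.log (x+y) - Real.log (x-y)) + y - 2*y^3/x^2 := by
  unfold Gf
  have : (y+x)/(2*x) * ((x-y) * Real.log (x-y)) = -((y^2-x^2)/(2*x)) * Real.log (x-y) := by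
    field_simp
    ring
  rw [this]; ring

private lemma Gf_zero {x : ℝ} (hx : 0 < x) : Gf x 0 = 0 := by
  unfold Gf
  field_simp
  ring

private lemma Gf_nonpos {x : ℝ} (hx : 0 < x) {z : ℝ} (hz : 0 ≤ z) : Gf x z ≤ 0 := by
  rcases lt_trichotomy z x with h | h | h
  · have hxz : (0:ℝ) < x + z := by linarith
    have hxz2 : (0:ℝ) < x - z := by linarith
    have L := myq_lower (t := z/x) (div_nonneg hz hx.le) ((div_lt_one hx).mpr h)
    have e1 : Real.log (1 + z/x) = Real.log (x+z) - Real.log x := by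
      rw [show (1 + z/x) = (x+z)/x by field_simp, Real.log_div (ne_of_gt hxz) (ne_of_gt hx)]
    have e2 : Real.log (1 - z/x) = Real.log (x-z) - Real.log x := by
      rw [show (1 - z/x) = (x-z)/x by field_simp,
        Real.log_div (ne_of_gt hxz2) (ne_of_gt hx)]
    rw [e1, e2] at L
    have L' : 2*(z/x) ≤ Real.log (x+z) - Real.log (x-z) := by linarith
    rw [Gf_eq hx]
    have hc : (z^2 - x^2)/(2*x) ≤ 0 := by
      apply div_nonpos_of_nonpos_of_nonneg <;> nlinarith
    have hmul : (z^2-x^2)/(2*x) * (Real.log (x+z) - Real.log (x-z))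
        ≤ (z^2-x^2)/(2*x) * (2*(z/x)) := mul_le_mul_of_nonpos_left L' hc
    have hid : (z^2-x^2)/(2*x) * (2*(z/x)) + z - 2*z^3/x^2 = -(z^3/x^2) := by
      field_simp; ring
    have : 0 ≤ z^3/x^2 := by positivity
    linarith
  · subst h
    have e0 : Gf z z = z - 2*z^3/z^2 := by unfold Gf; simp
    rw [e0]
    have : z^3/z^2 = z := by
      field_simp
    rw [show 2*z^3/z^2 = 2*(z^3/z^2) by ring, this]
    linarith
  · have hxz : (0:ℝ) < x + z := by linarith
    have hzx : (0:ℝ) < z - x := by linarith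
    have L := myq_upper (t := z/x) ((one_lt_div hx).mpr h)
    have e1 : Real.log (z/x + 1) = Real.log (z+x) - Real.log x := by
      rw [show (z/x + 1) = (z+x)/x by field_simp, Real.log_div (by positivity) (ne_of_gt hx)]
    have e2 : Real.log (z/x - 1) = Real.log (z-x) - Real.log x := by
      rw [show (z/x - 1) = (z-x)/x by field_simp, Real.log_div (ne_of_gt hzx) (ne_of_gt hx)]
    rw [e1, e2] at L
    have hne : z^2 - x^2 ≠ 0 := by nlinarith
    have e3 : 2*(z/x)/((z/x)^2 - 1) = 2*z*x/(z^2-x^2) := by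
      rw [show (z/x)^2 - 1 = (z^2-x^2)/x^2 by field_simp]
      field_simp
      try ring
    rw [e3] at L
    have L' : Real.log (x+z) - Real.log (x-z) ≤ 2*z*x/(z^2-x^2) := by
      rw [show x - z = -(z-x) by ring, Real.log_neg_eq_log, show x + z = z + x by ring]
      linarith
    rw [Gf_eq hx]
    have hc : 0 ≤ (z^2 - x^2)/(2*x) := div_nonneg (by nlinarith) (by linarith)
    have hmul : (z^2-x^2)/(2*x) * (Real.log (x+z) - Real.log (x-z))
        ≤ (z^2-x^2)/(2*x) * (2*z*x/(z^2-x^2)) := mul_le_mul_of_nonneg_left L' hc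
    have hid : (z^2-x^2)/(2*x) * (2*z*x/(z^2-x^2)) = z := by
      field_simp
    have hfin : z + z - 2*z^3/x^2 ≤ 0 := by
      have h2 : (2:ℝ)*z ≤ 2*z^3/x^2 := by
        rw [le_div_iff₀ (by positivity : (0:ℝ) < x^2)]
        nlinarith [mul_nonneg (mul_nonneg hz (sub_pos.mpr h).le) (by linarith : (0:ℝ) ≤ z + x)]
      linarith
    have := Gf_eq (x := x) (y := z) hx
    linarith [hmul, hid, hfin]

noncomputable def phifn (x y : ℝ) : ℝ :=
  y/x * (Real.log (x+y) - Real.log (x-y)) - 6*y^2/x^2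

private lemma Gf_contOn {x : ℝ} (hx : 0 < x) : ContinuousOn (Gf x) (Set.Ici 0) := by
  have c1 : ContinuousOn (fun y : ℝ => Real.log (x+y)) (Set.Ici 0) :=
    ((continuous_const.add continuous_id).continuousOn).log
      (fun y hy => by have : (0:ℝ) ≤ y := hy; intro h; simp only [Pi.add_apply, id_eq] at h; nlinarith)
  have c2 : Continuous (fun y : ℝ => (x - y) * Real.log (x - y)) := by
    have h : Continuous fun y : ℝ => x - y := continuous_const.sub continuous_id
    exact Real.continuous_mul_log.comp h
  have p1 : Continuous fun y : ℝ => (y^2 - x^2)/(2*x) :=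
    ((continuous_pow 2).sub continuous_const).div_const _
  have p2 : Continuous fun y : ℝ => (y + x)/(2*x) :=
    (continuous_id.add continuous_const).div_const _
  have p3 : Continuous fun y : ℝ => 2*y^3/x^2 :=
    (continuous_const.mul (continuous_pow 3)).div_const _
  exact ((((p1.continuousOn.mul c1).add (p2.continuousOn.mul c2.continuousOn)).add
    continuous_id.continuousOn).sub p3.continuousOn)

private lemma Gf_hasDeriv {x : ℝ} (hx : 0 < x) {y : ℝ} (hy : 0 < y) (hne : y ≠ x) :
    HasDerivAt (Gf x) (phifn x y) y := by
  have hxy : x + y ≠ 0 := by positivity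
  have hxmy : x - y ≠ 0 := sub_ne_zero.mpr (fun h => hne h.symm)
  have d1 : HasDerivAt (fun y : ℝ => (y^2 - x^2)/(2*x)) (2*y/(2*x)) y := by
    have := ((hasDerivAt_pow 2 y).sub_const (x^2)).div_const (2*x)
    simpa using this
  have d2 : HasDerivAt (fun y : ℝ => Real.log (x + y)) (1/(x+y)) y := by
    simpa using (((hasDerivAt_id y).const_add x).log hxy)
  have d3 : HasDerivAt (fun y : ℝ => x - y) (-1) y := by
    simpa using (hasDerivAt_id y).const_sub x
  have d4 : HasDerivAt (fun y : ℝ => Real.log (x - y)) ((-1)/(x-y)) y := d3.log hxmy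
  have d5 : HasDerivAt (fun y : ℝ => (x - y) * Real.log (x - y))
      ((-1) * Real.log (x-y) + (x-y) * ((-1)/(x-y))) y := d3.mul d4
  have d6 : HasDerivAt (fun y : ℝ => (y + x)/(2*x)) (1/(2*x)) y := by
    simpa using ((hasDerivAt_id y).add_const x).div_const (2*x)
  have d7 : HasDerivAt (fun y : ℝ => 2*y^3/x^2) (2*(3*y^2)/x^2) y := by
    have := ((hasDerivAt_pow 3 y).const_mul 2).div_const (x^2)
    simpa [mul_assoc] using this
  have dA := d1.mul d2
  have dB := d6.mul d5
  have := (((dA.add dB).add (hasDerivAt_id y)).sub d7)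
  refine this.congr_deriv ?_
  symm
  unfold phifn
  have h1 : (x - y) * ((-1)/(x-y)) = -1 := by field_simp
  rw [h1]
  field_simp
  ring

private lemma intervalIntegrable_mylog (a b : ℝ) : IntervalIntegrable Real.log volume a b := by
  have base : ∀ b : ℝ, 0 ≤ b → IntervalIntegrable Real.log volume 0 b := by
    intro b hb
    rw [intervalIntegrable_iff_integrableOn_Ioc_of_le hb]
    set M := max b 1 with hM
    have hM1 : (1:ℝ) ≤ M := le_max_right _ _
    have hbM : b ≤ M := le_max_left _ _
    have hg : IntegrableOn (fun y : ℝ => 2 * y ^ (-(1/2) : ℝ) + Real.log M)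
        (Set.Ioc 0 b) := by
      apply Integrable.add
      · have := intervalIntegral.intervalIntegrable_rpow' (a := 0) (b := b)
          (r := -(1/2)) (by norm_num)
        rw [intervalIntegrable_iff_integrableOn_Ioc_of_le hb] at this
        exact this.const_mul 2
      · exact (integrableOn_const_iff (by finiteness)).mpr (Or.inr measure_Ioc_lt_top)
    apply Integrable.mono' hg Real.measurable_log.aestronglyMeasurable
    filter_upwards [ae_restrict_mem measurableSet_Ioc] with y hy
    obtain ⟨hy0, hyb⟩ := hy
    have hrp : (0:ℝ) ≤ y ^ (-(1/2) : ℝ) := Real.rpow_nonneg hy0.le _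
    have hlogM : 0 ≤ Real.log M := Real.log_nonneg hM1
    rcases le_or_gt y 1 with h1 | h1
    · have habs : ‖Real.log y‖ = -Real.log y := by
        rw [Real.norm_eq_abs, abs_of_nonpos (Real.log_nonpos hy0.le h1)]
      have e : -Real.log y = 2 * Real.log (Real.sqrt y⁻¹) := by
        rw [Real.log_sqrt (by positivity), Real.log_inv]; ring
      have h2 : Real.log (Real.sqrt y⁻¹) ≤ Real.sqrt y⁻¹ - 1 :=
        Real.log_le_sub_one_of_pos (by positivity)
      have h3 : Real.sqrt y⁻¹ = y ^ (-(1/2) : ℝ) := by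
        rw [Real.sqrt_inv, Real.sqrt_eq_rpow, ← Real.rpow_neg hy0.le]
      rw [habs, e, h3]
      nlinarith [h3 ▸ h2]
    · have habs : ‖Real.log y‖ = Real.log y := by
        rw [Real.norm_eq_abs, abs_of_nonneg (Real.log_nonneg h1.le)]
      have h2 : Real.log y ≤ Real.log M := Real.log_le_log hy0 (hyb.trans hbM)
      rw [habs]; linarith
  have all0 : ∀ b : ℝ, IntervalIntegrable Real.log volume 0 b := by
    intro b
    rcases le_or_gt 0 b with h | h
    · exact base b h
    · have h2 := base (-b) (by linarith)
      have h3 : IntervalIntegrable (fun x : ℝ => Real.log (-x)) volume 0 b := by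
        rw [IntervalIntegrable.iff_comp_neg]
        simpa using h2
      simpa [Real.log_neg_eq_log] using h3
  exact ((all0 a).symm.trans (all0 b))

private lemma ii_logsub (x a b : ℝ) :
    IntervalIntegrable (fun y => Real.log (x - y)) volume a b := by
  have := (intervalIntegrable_mylog (x - a) (x - b)).comp_sub_left x
  simpa using this

private lemma phifn_ii {x : ℝ} (hx : 0 < x) {a b : ℝ} (ha : 0 ≤ a) (hb : 0 ≤ b) :
    IntervalIntegrable (phifn x) volume a b := by
  have hsub : Set.uIcc a b ⊆ Set.Ici 0 := by
    intro y hy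
    exact le_trans (le_min ha hb) hy.1
  have F1 : IntervalIntegrable (fun y => y/x * Real.log (x+y)) volume a b := by
    apply ContinuousOn.intervalIntegrable
    apply ContinuousOn.mul (continuous_id.div_const x).continuousOn
    apply ContinuousOn.log ((continuous_const.add continuous_id).continuousOn)
    intro y hy
    have h0 : (0:ℝ) ≤ y := hsub hy
    have : (0:ℝ) < x + y := by simpa using by linarith
    simpa using ne_of_gt this
  have F2 : IntervalIntegrable (fun y => y/x * Real.log (x-y)) volume a b :=
    (ii_logsub x a b).continuousOn_mul (continuous_id.div_const x).continuousOn
  have F3 : IntervalIntegrable (fun y => 6*y^2/x^2) volume a b :=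
    (((continuous_const.mul (continuous_pow 2)).div_const _)).intervalIntegrable _ _
  have he : phifn x = fun y => (y/x * Real.log (x+y) - y/x * Real.log (x-y)) - 6*y^2/x^2 := by
    funext y; unfold phifn; ring
  rw [he]
  exact (F1.sub F2).sub F3

private lemma integral_phifn {x : ℝ} (hx : 0 < x) {z : ℝ} (hz : 0 < z) :
    ∫ y in Set.Ioc 0 z, phifn x y = Gf x z := by
  have base : ∀ a b : ℝ, 0 ≤ a → a ≤ b → (x ∉ Set.Ioo a b) →
      ∫ y in a..b, phifn x y = Gf x b - Gf x a := by
    intro a b ha hab hxmem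
    apply intervalIntegral.integral_eq_sub_of_hasDerivAt_of_le hab
    · exact (Gf_contOn hx).mono (fun y hy => ha.trans hy.1)
    · intro y hy
      exact Gf_hasDeriv hx (lt_of_le_of_lt ha hy.1) (fun h => hxmem (h ▸ hy))
    · exact phifn_ii hx ha (ha.trans hab)
  rcases le_or_gt z x with h | h
  · have hbase := base 0 z le_rfl hz.le (fun hmem => absurd hmem.2 (not_lt.mpr h))
    rw [intervalIntegral.integral_of_le hz.le] at hbase
    rw [hbase, Gf_zero hx, sub_zero]
  · have h1 := base 0 x le_rfl hx.le (fun hmem => lt_irrefl x hmem.2)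
    have h2 := base x z hx.le h.le (fun hmem => lt_irrefl x hmem.1)
    have hadd := intervalIntegral.integral_add_adjacent_intervals
      (phifn_ii hx le_rfl hx.le) (phifn_ii hx hx.le (hx.le.trans h.le))
    rw [← intervalIntegral.integral_of_le hz.le, ← hadd, h1, h2, Gf_zero hx]
    ring

theorem T_upper_bound (f : ℝ → ℝ) (heven : ∀ x, f (-x) = f x)
    (hmono : AntitoneOn f (Set.Ici 0)) (hnonneg : ∀ x, 0 ≤ f x)
    (hconv : ConvexOn ℝ (Set.Ici 0) (fun s => f (Real.sqrt s)))
    (hbound : ∀ x, max (1 - x ^ 2) 0 ≤ f x ∧ f x ≤ 1)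
    (hb2 : IntegrableOn (fun y => y ^ 2 * f y) (Set.Ioi 0))
    (hb : IntegrableOn f (Set.Ioi 0)) :
    ∀ x : ℝ, 0 < x →
      (1 / Real.pi) * (∫ y in Set.Ioi (0 : ℝ),
          f y * ((y / x) * Real.log (|(x + y) / (x - y)|))) ≤
        3 * ((2 / Real.pi) * ∫ y in Set.Ioi (0 : ℝ), y ^ 2 * f y) / x ^ 2 := by
  intro x hx
  -- measurability of f
  have hk : Antitone (fun y : ℝ => f (max y 0)) := by
    intro y1 y2 h
    exact hmono (le_max_right y1 0) (le_max_right y2 0) (max_le_max h le_rfl)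
  have hfeq : f = (fun y : ℝ => f (max y 0)) ∘ (fun y : ℝ => |y|) := by
    funext y
    rcases le_or_gt 0 y with h | h
    · simp [Function.comp, abs_of_nonneg h, max_eq_left h]
    · simp only [Function.comp, abs_of_neg h]
      rw [max_eq_left (by linarith : (0:ℝ) ≤ -y)]
      exact (heven y).symm
  have hfm : Measurable f := by rw [hfeq]; exact hk.measurable.comp measurable_abs
  have hlogm : Measurable (fun y : ℝ => Real.log (x+y) - Real.log (x-y)) :=
    (Real.measurable_log.comp (measurable_const.add measurable_id)).sub
      (Real.measurable_log.comp (measurable_const.sub measurable_id))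
  have hphim : Measurable (phifn x) := by
    unfold phifn
    exact ((measurable_id.div_const x).mul hlogm).sub
      (((measurable_id.pow_const 2).const_mul 6).div_const _)
  set μ := volume.restrict (Set.Ioi (0:ℝ)) with hμ
  set ψ : ℝ → ℝ := fun y => f y * (y/x * (Real.log (x+y) - Real.log (x-y))) with hψ
  have hψm : Measurable ψ := hfm.mul ((measurable_id.div_const x).mul hlogm)
  -- rewrite the integrand
  have hcong : ∀ᵐ y ∂μ, f y * ((y / x) * Real.log (|(x + y) / (x - y)|)) = ψ y := by
    have h0 : ∀ᵐ y : ℝ, y ≠ x := by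
      rw [ae_iff]
      simp only [not_not]
      rw [show {y : ℝ | y = x} = {x} from Set.setOf_eq_eq_singleton]
      exact measure_singleton x
    filter_upwards [ae_restrict_of_ae h0, ae_restrict_mem measurableSet_Ioi] with y hyne hy0
    have hy0' : (0:ℝ) < y := hy0
    have h1 : x + y ≠ 0 := by positivity
    have h2 : x - y ≠ 0 := sub_ne_zero.mpr (Ne.symm hyne)
    rw [Real.log_abs, Real.log_div h1 h2]
  rw [integral_congr_ae hcong]
  -- integrability of ψ
  have habs_le : ∀ y, |f y| ≤ 1 := fun y => by
    rw [abs_of_nonneg (hnonneg y)]; exact (hbound y).2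
  have hint1 : IntegrableOn ψ (Set.Ioc 0 (2*x)) := by
    have hgl1 : IntegrableOn (fun y => Real.log (x+y)) (Set.Ioc 0 (2*x)) := by
      have hii : IntervalIntegrable (fun y => Real.log (x+y)) volume 0 (2*x) := by
        apply ContinuousOn.intervalIntegrable
        apply ContinuousOn.log ((continuous_const.add continuous_id).continuousOn)
        intro y hy
        have h0 : (0:ℝ) ≤ y := le_trans (le_min le_rfl (by positivity)) hy.1
        have hpos : (0:ℝ) < x + y := by linarith
        simpa using ne_of_gt hpos
      rwa [intervalIntegrable_iff_integrableOn_Ioc_of_le (by positivity)] at hii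
    have hgl2 : IntegrableOn (fun y => Real.log (x-y)) (Set.Ioc 0 (2*x)) := by
      have hii := ii_logsub x 0 (2*x)
      rwa [intervalIntegrable_iff_integrableOn_Ioc_of_le (by positivity)] at hii
    have hg : IntegrableOn (fun y => 2*|Real.log (x+y)| + 2*|Real.log (x-y)|)
        (Set.Ioc 0 (2*x)) := (hgl1.abs.const_mul 2).add (hgl2.abs.const_mul 2)
    apply Integrable.mono' hg hψm.aestronglyMeasurable
    filter_upwards [ae_restrict_mem measurableSet_Ioc] with y hy
    obtain ⟨hy0, hy2⟩ := hy
    have hyx : |y / x| ≤ 2 := by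
      rw [abs_of_nonneg (by positivity), div_le_iff₀ hx]; linarith
    have e1 : ‖ψ y‖ = |f y| * (|y/x| * |Real.log (x+y) - Real.log (x-y)|) := by
      rw [Real.norm_eq_abs,
        show ψ y = f y * (y/x*(Real.log (x+y) - Real.log (x-y))) from rfl,
        abs_mul, abs_mul]
    rw [e1]
    have hd : |Real.log (x+y) - Real.log (x-y)| ≤ |Real.log (x+y)| + |Real.log (x-y)| := by
      rw [sub_eq_add_neg]
      exact (abs_add_le _ _).trans_eq (by rw [abs_neg])
    have s1 : |y/x| * |Real.log (x+y) - Real.log (x-y)|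
        ≤ 2 * (|Real.log (x+y)| + |Real.log (x-y)|) :=
      mul_le_mul hyx hd (abs_nonneg _) (by norm_num)
    have s2 : |f y| * (|y/x| * |Real.log (x+y) - Real.log (x-y)|)
        ≤ 1 * (2 * (|Real.log (x+y)| + |Real.log (x-y)|)) :=
      mul_le_mul (habs_le y) s1 (by positivity) (by norm_num)
    linarith
  have hint2 : IntegrableOn ψ (Set.Ioi (2*x)) := by
    have hg : IntegrableOn (fun y => 4 * f y) (Set.Ioi (2*x)) :=
      (hb.mono_set (Set.Ioi_subset_Ioi (by positivity))).const_mul 4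
    apply Integrable.mono' hg hψm.aestronglyMeasurable
    filter_upwards [ae_restrict_mem measurableSet_Ioi] with y hy
    have hy2 : 2*x < y := hy
    have hyx : (0:ℝ) < y - x := by linarith
    have hxy : (0:ℝ) < x + y := by linarith
    have e1 : Real.log (x - y) = Real.log (y - x) := by
      rw [show x - y = -(y-x) by ring, Real.log_neg_eq_log]
    have e2 : Real.log (x+y) - Real.log (y-x) = Real.log ((x+y)/(y-x)) :=
      (Real.log_div (ne_of_gt hxy) (ne_of_gt hyx)).symm
    have hrat1 : (1:ℝ) ≤ (x+y)/(y-x) := by rw [le_div_iff₀ hyx]; linarith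
    have hlog_nonneg : 0 ≤ Real.log ((x+y)/(y-x)) := Real.log_nonneg hrat1
    have hlog_le : Real.log ((x+y)/(y-x)) ≤ (x+y)/(y-x) - 1 :=
      Real.log_le_sub_one_of_pos (by positivity)
    have hrat2 : (x+y)/(y-x) - 1 = 2*x/(y-x) := by field_simp; ring
    have hkey : y/x * Real.log ((x+y)/(y-x)) ≤ 4 := by
      have h1 : y/x * Real.log ((x+y)/(y-x)) ≤ y/x * (2*x/(y-x)) := by
        apply mul_le_mul_of_nonneg_left _ (div_nonneg (by linarith) hx.le)
        rw [← hrat2]; exact hlog_le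
      have h2 : y/x * (2*x/(y-x)) = 2*y/(y-x) := by field_simp
      have h3 : 2*y/(y-x) ≤ 4 := by rw [div_le_iff₀ hyx]; linarith
      rw [h2] at h1
      linarith
    have e3 : ψ y = f y * (y/x * Real.log ((x+y)/(y-x))) := by
      simp only [hψ]; rw [e1, e2]
    rw [e3, Real.norm_eq_abs, abs_mul, abs_of_nonneg (hnonneg y),
      abs_of_nonneg (mul_nonneg (div_nonneg (by linarith) hx.le) hlog_nonneg)]
    calc f y * (y/x * Real.log ((x+y)/(y-x))) ≤ f y * 4 :=
          mul_le_mul_of_nonneg_left hkey (hnonneg y)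
      _ = 4 * f y := by ring
  have hψint : IntegrableOn ψ (Set.Ioi 0) := by
    rw [← Set.Ioc_union_Ioi_eq_Ioi (le_of_lt (by positivity : (0:ℝ) < 2*x))]
    exact hint1.union hint2
  have h6int : IntegrableOn (fun y => f y * (6*y^2/x^2)) (Set.Ioi 0) := by
    have he : (fun y : ℝ => f y * (6*y^2/x^2)) = fun y => (6/x^2) * (y^2 * f y) := by
      funext y; ring
    rw [he]; exact hb2.const_mul _
  have hfφint : IntegrableOn (fun y => f y * phifn x y) (Set.Ioi 0) := by
    have he : (fun y => f y * phifn x y) = fun y => ψ y - f y * (6*y^2/x^2) := by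
      funext y; simp only [hψ]; unfold phifn; ring
    rw [he]; exact hψint.sub h6int
  -- Fubini / layer cake
  set A : Set (ℝ×ℝ) := {q : ℝ×ℝ | q.1 < f q.2} with hA
  have hAm : MeasurableSet A := measurableSet_lt measurable_fst (hfm.comp measurable_snd)
  set F : ℝ×ℝ → ℝ := A.indicator (fun q => phifn x q.2) with hF
  have hFm : AEStronglyMeasurable F (μ.prod μ) :=
    ((hphim.comp measurable_snd).indicator hAm).aestronglyMeasurable
  have hFs : ∀ s y : ℝ, F (s,y) = if s < f y then phifn x y else 0 := by
    intro s y
    by_cases h : s < f y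
    · rw [hF, Set.indicator_of_mem (by simpa [hA] using h)]; simp [h]
    · rw [hF, Set.indicator_of_notMem (by simpa [hA] using h)]; simp [h]
  have inner_norm : ∀ y, (∫ s, ‖F (s, y)‖ ∂μ) = f y * |phifn x y| := by
    intro y
    have e : (fun s => ‖F (s, y)‖) = Set.indicator (Set.Iio (f y)) (fun _ => |phifn x y|) := by
      funext s
      by_cases h : s < f y <;>
        simp [hFs, h, Set.indicator, Set.mem_Iio, Real.norm_eq_abs]
    rw [e, integral_indicator_const _ measurableSet_Iio, hμ, measureReal_def,
      Measure.restrict_apply measurableSet_Iio,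
      show Set.Iio (f y) ∩ Set.Ioi 0 = Set.Ioo 0 (f y) from by ext u; simp [and_comm],
      Real.volume_Ioo, ENNReal.toReal_ofReal (by simpa using hnonneg y)]
    simp [smul_eq_mul, mul_comm]
  have inner_val : ∀ y, (∫ s, F (s, y) ∂μ) = f y * phifn x y := by
    intro y
    have e : (fun s => F (s, y)) = Set.indicator (Set.Iio (f y)) (fun _ => phifn x y) := by
      funext s
      by_cases h : s < f y <;>
        simp [hFs, h, Set.indicator, Set.mem_Iio]
    rw [e, integral_indicator_const _ measurableSet_Iio, hμ, measureReal_def,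
      Measure.restrict_apply measurableSet_Iio,
      show Set.Iio (f y) ∩ Set.Ioi 0 = Set.Ioo 0 (f y) from by ext u; simp [and_comm],
      Real.volume_Ioo, ENNReal.toReal_ofReal (by simpa using hnonneg y)]
    simp [smul_eq_mul, mul_comm]
  have hFint : Integrable F (μ.prod μ) := by
    rw [integrable_prod_iff' hFm]
    constructor
    · refine Filter.Eventually.of_forall (fun y => ?_)
      have e : (fun s => F (s, y)) = Set.indicator (Set.Iio (f y)) (fun _ => phifn x y) := by
        funext s
        by_cases h : s < f y <;>
          simp [hFs, h, Set.indicator, Set.mem_Iio]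
      rw [e, integrable_indicator_iff measurableSet_Iio]
      apply (integrableOn_const_iff (by finiteness)).mpr
      right
      rw [hμ, Measure.restrict_apply measurableSet_Iio,
        show Set.Iio (f y) ∩ Set.Ioi 0 = Set.Ioo 0 (f y) from by ext u; simp [and_comm],
        Real.volume_Ioo]
      exact ENNReal.ofReal_lt_top
    · rw [show (fun y => ∫ s, ‖F (s,y)‖ ∂μ) = fun y => f y * |phifn x y| from funext inner_norm]
      exact hfφint.abs.congr (Filter.Eventually.of_forall
        (fun y => by
          show |f y * phifn x y| = f y * |phifn x y|
          rw [abs_mul, abs_of_nonneg (hnonneg y)]))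
  have hinner_le : ∀ s ∈ Set.Ioi (0:ℝ), (∫ y, F (s, y) ∂μ) ≤ 0 := by
    intro s hs
    have hsp : (0:ℝ) < s := hs
    have hBsetm : MeasurableSet {y : ℝ | s < f y} := measurableSet_lt measurable_const hfm
    have e : (fun y => F (s, y)) = Set.indicator {y : ℝ | s < f y} (phifn x) := by
      funext y
      by_cases h : s < f y <;> simp [hFs, h, Set.indicator]
    rw [e, integral_indicator hBsetm, hμ, Measure.restrict_restrict hBsetm]
    set Aset := {y : ℝ | s < f y} ∩ Set.Ioi 0 with hAset
    rcases Set.eq_empty_or_nonempty Aset with hemp | hne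
    · rw [hemp]; simp
    · have hBdd : BddAbove Aset := by
        by_contra hnb
        have hall : ∀ y ∈ Set.Ioi (0:ℝ), s ≤ f y := by
          intro y hy
          obtain ⟨a, haA, hya⟩ := not_bddAbove_iff.mp hnb y
          have hfa : f a ≤ f y := hmono (le_of_lt (Set.mem_Ioi.mp hy)) (le_of_lt (Set.mem_Ioi.mp haA.2)) hya.le
          have := haA.1
          simp only [Set.mem_setOf_eq] at this
          linarith
        have hcint : Integrable (fun _ : ℝ => s) μ := by
          apply Integrable.mono' hb aestronglyMeasurable_const
          filter_upwards [ae_restrict_mem measurableSet_Ioi] with y hy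
          rw [Real.norm_eq_abs, abs_of_nonneg hsp.le]
          exact hall y hy
        rw [integrable_const_iff] at hcint
        rcases hcint with h | h
        · exact absurd h (ne_of_gt hsp)
        · rw [isFiniteMeasure_restrict, Real.volume_Ioi] at h
          exact absurd h (by simp)
      set z := sSup Aset with hz
      obtain ⟨a0, ha0⟩ := hne
      have hub : ∀ a ∈ Aset, a ≤ z := fun a ha => le_csSup hBdd ha
      have hzpos : 0 < z := lt_of_lt_of_le ha0.2 (hub a0 ha0)
      have hsub1 : Set.Ioo 0 z ⊆ Aset := by
        intro y hy
        obtain ⟨a, haA, hya⟩ := exists_lt_of_lt_csSup ⟨a0, ha0⟩ hy.2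
        refine ⟨?_, hy.1⟩
        have hfa : f a ≤ f y := hmono hy.1.le (le_of_lt (Set.mem_Ioi.mp haA.2)) hya.le
        have := haA.1
        simp only [Set.mem_setOf_eq] at *
        linarith
      have hsub2 : Aset ⊆ Set.Ioc 0 z := fun a ha => ⟨ha.2, hub a ha⟩
      have hae : Aset =ᵐ[volume] Set.Ioc 0 z := by
        apply MeasureTheory.ae_eq_set.mpr
        constructor
        · rw [Set.diff_eq_empty.mpr hsub2]; exact measure_empty
        · apply measure_mono_null ?_ (measure_singleton z)
          intro u hu
          rcases eq_or_lt_of_le hu.1.2 with h | h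
          · simp [h]
          · exact absurd (hsub1 ⟨hu.1.1, h⟩) hu.2
      rw [setIntegral_congr_set hae, integral_phifn hx hzpos]
      exact Gf_nonpos hx hzpos.le
  have hle : (∫ y in Set.Ioi (0:ℝ), f y * phifn x y) ≤ 0 := by
    have e1 : (∫ y in Set.Ioi (0:ℝ), f y * phifn x y) = ∫ y, (∫ s, F (s,y) ∂μ) ∂μ :=
      integral_congr_ae (Filter.Eventually.of_forall (fun y => (inner_val y).symm))
    have hFint' : Integrable (Function.uncurry fun s y => F (s, y)) (μ.prod μ) := hFint
    rw [e1, ← MeasureTheory.integral_integral_swap hFint']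
    apply integral_nonpos_of_ae
    filter_upwards [ae_restrict_mem measurableSet_Ioi] with s hs
    exact hinner_le s hs
  have hsum : (∫ y in Set.Ioi (0:ℝ), ψ y)
      = (∫ y in Set.Ioi (0:ℝ), f y * phifn x y)
        + ∫ y in Set.Ioi (0:ℝ), f y * (6*y^2/x^2) := by
    rw [← integral_add hfφint h6int]
    apply integral_congr_ae (Filter.Eventually.of_forall (fun y => ?_))
    simp only [hψ]; unfold phifn; ring
  have h6 : (∫ y in Set.Ioi (0:ℝ), f y * (6*y^2/x^2))
      = (6/x^2) * ∫ y in Set.Ioi (0:ℝ), y^2 * f y := by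
    rw [← integral_const_mul]
    apply integral_congr_ae (Filter.Eventually.of_forall (fun y => by ring))
  have hIle : (∫ y in Set.Ioi (0:ℝ), ψ y)
      ≤ (6/x^2) * ∫ y in Set.Ioi (0:ℝ), y^2 * f y := by
    rw [hsum, h6]; linarith
  have hπ := Real.pi_pos
  calc (1/Real.pi) * (∫ y in Set.Ioi (0:ℝ), ψ y)
      ≤ (1/Real.pi) * ((6/x^2) * ∫ y in Set.Ioi (0:ℝ), y^2 * f y) :=
        mul_le_mul_of_nonneg_left hIle (by positivity)
    _ = 3 * ((2/Real.pi) * ∫ y in Set.Ioi (0:ℝ), y^2 * f y) / x^2 := by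
        field_simp
        ring
end
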